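/- arXiv:1411.2935 — 7 statements merged into one kernel-verified Lean document; each statement's English description precedes it below -/
import Mathlib

section
/- Let r ≥ 0 be even and let l_1,…,l_r, θ_1,…,θ_r, L be real numbers. Then the trace of A(l_1,θ_1)·A(l_2,θ_2)⋯A(l_r,θ_r)·γ_L equals the sum over all subsets I ⊆ {1,…,r} of even cardinality of (−1)^{s(I)} · 2 · sin θ_I · cos θ_{Î} · cosh(L/2 − L_I). -/
open Finset

/-- The matrix `A(l,θ) = [[cos θ, −e^l sin θ], [−e^{−l} sin θ, −cos θ]]`. -/
noncomputable def Amat (l θ : ℝ) : Matrix (Fin 2) (Fin 2) ℝ :=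
  !![Real.cos θ, -Real.exp l * Real.sin θ; -Real.exp (-l) * Real.sin θ, -Real.cos θ]

/-- The matrix `γ_L = diag(e^{L/2}, e^{−L/2})`. -/
noncomputable def gammaMat (L : ℝ) : Matrix (Fin 2) (Fin 2) ℝ :=
  !![Real.exp (L / 2), 0; 0, Real.exp (-(L / 2))]

/-- The matrix `S(z) = diag(e^{z/2}, e^{−z/2})`. -/
noncomputable def Smat (z : ℝ) : Matrix (Fin 2) (Fin 2) ℝ :=
  !![Real.exp (z / 2), 0; 0, Real.exp (-(z / 2))]

/-- The matrix `D = diag(1, −1)`. -/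
def Dmat : Matrix (Fin 2) (Fin 2) ℝ := !![1, 0; 0, -1]

/-- Alternating length `L_I = Σ_{j=1}^k (−1)^j l_{i_j}` for `I = {i_1 < ⋯ < i_k}`. -/
def altLen {r : ℕ} (l : Fin r → ℝ) (I : Finset (Fin r)) : ℝ :=
  let s := (I.sort (· ≤ ·)).map l
  ∑ j ∈ Finset.range s.length, (-1 : ℝ) ^ (j + 1) * s.getD j 0

/-- Signature `s(I) = (i_2−i_1+1) + (i_4−i_3+1) + ⋯ + (i_k−i_{k−1}+1)` for `I` of even
cardinality, with `s(∅) = 0`. -/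
def sig {r : ℕ} (I : Finset (Fin r)) : ℕ :=
  let s := (I.sort (· ≤ ·)).map Fin.val
  ∑ m ∈ Finset.range (s.length / 2), (s.getD (2 * m + 1) 0 - s.getD (2 * m) 0 + 1)

/-- `P(k,n)`: the set of `n`-tuples of nonnegative integers summing to `k`. -/
def Pkn (k n : ℕ) : Finset (Fin n → ℕ) := Finset.Nat.antidiagonalTuple n k

/-- `B_{n,k,r}`: sum of multinomial coefficients `(k choose q)` over `q ∈ P(k,n)` whose
first `r` entries are odd and remaining entries are even. -/
def Bnkr (n k r : ℕ) : ℕ :=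
  ∑ q ∈ (Pkn k n).filter
      (fun q => ∀ i : Fin n, ((i : ℕ) < r → Odd (q i)) ∧ (r ≤ (i : ℕ) → Even (q i))),
    Nat.multinomial Finset.univ q

def Xmat : Matrix (Fin 2) (Fin 2) ℝ := !![0, 1; 1, 0]

lemma Smat_mul_Smat (a b : ℝ) : Smat a * Smat b = Smat (a + b) := by
  simp [Smat, Matrix.mul_fin_two, ← Real.exp_add]
  ring_nf
  exact ⟨trivial, trivial⟩

lemma Smat_zero : Smat 0 = 1 := by
  simp [Smat, Matrix.one_fin_two]

lemma Xmat_mul_Smat (a : ℝ) : Xmat * Smat a = Smat (-a) * Xmat := by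
  simp [Xmat, Smat, Matrix.mul_fin_two]
  ring_nf
  exact ⟨trivial, trivial⟩

lemma Dmat_mul_Smat (a : ℝ) : Dmat * Smat a = Smat a * Dmat := by
  simp [Dmat, Smat, Matrix.mul_fin_two]

lemma Dmat_mul_Xmat : Dmat * Xmat = -(Xmat * Dmat) := by
  simp [Dmat, Xmat, Matrix.mul_fin_two]

lemma Xmat_sq : Xmat * Xmat = 1 := by
  simp [Xmat, Matrix.mul_fin_two, Matrix.one_fin_two]

lemma Dmat_sq : Dmat * Dmat = 1 := by
  simp [Dmat, Matrix.mul_fin_two, Matrix.one_fin_two]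

lemma Xpow_mul_Smat (k : ℕ) : ∀ a : ℝ,
    Xmat ^ k * Smat a = Smat ((-1) ^ k * a) * Xmat ^ k := by
  induction k with
  | zero => intro a; simp
  | succ n ih =>
    intro a
    rw [pow_succ, mul_assoc, Xmat_mul_Smat, ← mul_assoc, ih, mul_assoc, ← pow_succ]
    rw [show (-1 : ℝ) ^ n * -a = (-1) ^ (n + 1) * a by ring]

lemma Dpow_mul_Smat (m : ℕ) (a : ℝ) : Dmat ^ m * Smat a = Smat a * Dmat ^ m :=
  (Commute.pow_left (Dmat_mul_Smat a) m : Commute _ _).eq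

lemma Dpow_mul_Xmat (m : ℕ) : Dmat ^ m * Xmat = (-1 : ℝ) ^ m • (Xmat * Dmat ^ m) := by
  induction m with
  | zero => simp
  | succ n ih =>
    rw [pow_succ, mul_assoc, Dmat_mul_Xmat, pow_succ]
    rw [mul_neg, ← mul_assoc, ih]
    simp only [Matrix.smul_mul, pow_succ, mul_assoc, neg_smul, neg_neg, mul_neg]
    module

lemma Amat_decomp (l θ : ℝ) :
    Amat l θ = Real.cos θ • Dmat - Real.sin θ • (Smat l * Xmat * Smat (-l)) := by
  simp only [Smat, Xmat, Matrix.mul_fin_two]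
  norm_num
  ext i j
  fin_cases i <;> fin_cases j <;>
    simp [Amat, Dmat, ← Real.exp_add] <;> ring_nf

lemma E_mul_D (w : ℝ) (k m : ℕ) :
    (Smat w * Xmat ^ k * Dmat ^ m) * Dmat = Smat w * Xmat ^ k * Dmat ^ (m + 1) := by
  rw [mul_assoc, ← pow_succ]

lemma E_mul_SXS (w c : ℝ) (k m : ℕ) :
    (Smat w * Xmat ^ k * Dmat ^ m) * (Smat c * Xmat * Smat (-c)) =
      (-1 : ℝ) ^ m • (Smat (w + 2 * (-1) ^ k * c) * Xmat ^ (k + 1) * Dmat ^ m) := by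
  calc (Smat w * Xmat ^ k * Dmat ^ m) * (Smat c * Xmat * Smat (-c))
      = Smat w * (Xmat ^ k * (Dmat ^ m * Smat c) * Xmat) * Smat (-c) := by
        simp only [mul_assoc]
    _ = Smat w * (Smat ((-1) ^ k * c) * (Xmat ^ k * (Dmat ^ m * Xmat))) * Smat (-c) := by
        rw [Dpow_mul_Smat, ← mul_assoc (Xmat ^ k), Xpow_mul_Smat]
        simp only [mul_assoc]
    _ = (-1 : ℝ) ^ m • (Smat w * Smat ((-1) ^ k * c) * Xmat ^ (k + 1) * (Dmat ^ m * Smat (-c))) := by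
        rw [Dpow_mul_Xmat]
        simp only [Matrix.mul_smul, Matrix.smul_mul, pow_succ, mul_assoc]
    _ = (-1 : ℝ) ^ m • (Smat (w + (-1) ^ k * c) * (Xmat ^ (k + 1) * Smat (-c)) * Dmat ^ m) := by
        rw [Smat_mul_Smat, Dpow_mul_Smat]
        simp only [mul_assoc]
    _ = (-1 : ℝ) ^ m • (Smat (w + 2 * (-1) ^ k * c) * Xmat ^ (k + 1) * Dmat ^ m) := by
        rw [Xpow_mul_Smat, ← mul_assoc, Smat_mul_Smat,
          show w + (-1 : ℝ) ^ k * c + (-1) ^ (k + 1) * -c = w + 2 * (-1) ^ k * c by ring]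

lemma Xpow_even {k : ℕ} (hk : Even k) : Xmat ^ k = 1 := by
  obtain ⟨t, rfl⟩ := hk
  rw [← two_mul, pow_mul, show Xmat ^ 2 = 1 by rw [pow_two, Xmat_sq], one_pow]

lemma Dpow_even {k : ℕ} (hk : Even k) : Dmat ^ k = 1 := by
  obtain ⟨t, rfl⟩ := hk
  rw [← two_mul, pow_mul, show Dmat ^ 2 = 1 by rw [pow_two, Dmat_sq], one_pow]

lemma Xpow_odd {k : ℕ} (hk : Odd k) : Xmat ^ k = Xmat := by
  obtain ⟨t, rfl⟩ := hk
  rw [pow_add, pow_one, Xpow_even (even_two_mul t), one_mul]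

lemma Dpow_odd {k : ℕ} (hk : Odd k) : Dmat ^ k = Dmat := by
  obtain ⟨t, rfl⟩ := hk
  rw [pow_add, pow_one, Dpow_even (even_two_mul t), one_mul]

lemma trace_SXDS (w L : ℝ) : Matrix.trace (Smat w * Xmat * Dmat * Smat L) = 0 := by
  simp [Smat, Xmat, Dmat, Matrix.mul_fin_two, Matrix.trace_fin_two_of]

lemma trace_SS (w L : ℝ) :
    Matrix.trace (Smat w * Smat L) = 2 * Real.cosh ((w + L) / 2) := by
  rw [Smat_mul_Smat]
  simp [Smat, Matrix.trace_fin_two_of, Real.cosh_eq]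
  ring

lemma last_not_mem_map {r : ℕ} (J : Finset (Fin r)) :
    Fin.last r ∉ J.map Fin.castSuccEmb := by
  intro h
  obtain ⟨x, -, hx⟩ := Finset.mem_map.mp h
  exact (Fin.castSucc_lt_last x).ne hx

lemma sort_map_castSucc {r : ℕ} (J : Finset (Fin r)) :
    (J.map Fin.castSuccEmb).sort (· ≤ ·) = (J.sort (· ≤ ·)).map Fin.castSucc := by
  unfold Finset.sort
  rw [Finset.map_val]
  exact (Multiset.map_sort (r := (· ≤ ·)) (r' := (· ≤ ·)) Fin.castSucc J.val (fun a _ b _ => Iff.rfl)).symm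

lemma sort_insert_last {r : ℕ} (K : Finset (Fin (r + 1))) (hK : Fin.last r ∉ K) :
    (insert (Fin.last r) K).sort (· ≤ ·) = K.sort (· ≤ ·) ++ [Fin.last r] := by
  apply List.Perm.eq_of_pairwise' (Finset.pairwise_sort _ _) ?_ ?_
  · refine List.pairwise_append.mpr ⟨Finset.pairwise_sort _ _, List.pairwise_singleton _ _,
      fun x _ y hy => ?_⟩
    simp only [List.mem_singleton] at hy
    subst hy
    exact Fin.le_last x
  · have h1 : ((insert (Fin.last r) K).sort (· ≤ ·)).Perm (Fin.last r :: K.sort (· ≤ ·)) := by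
      refine Multiset.coe_eq_coe.mp ?_
      rw [Finset.sort_eq, ← Multiset.cons_coe, Finset.sort_eq, Finset.insert_val_of_notMem hK]
    exact h1.trans (List.perm_append_singleton _ _).symm

lemma altLen_map {r : ℕ} (l : Fin (r + 1) → ℝ) (J : Finset (Fin r)) :
    altLen l (J.map Fin.castSuccEmb) = altLen (fun i => l i.castSucc) J := by
  unfold altLen
  rw [sort_map_castSucc, List.map_map]
  rfl

@[simp] lemma castSuccEmb_apply {r : ℕ} (x : Fin r) :
    Fin.castSuccEmb x = x.castSucc := rfl

lemma mem_map_castSucc {r : ℕ} (J : Finset (Fin r)) (i : Fin r) :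
    i.castSucc ∈ J.map Fin.castSuccEmb ↔ i ∈ J := by
  simp only [Finset.mem_map, castSuccEmb_apply]
  exact ⟨fun ⟨a, ha, h⟩ => (Fin.castSucc_injective r h) ▸ ha, fun h => ⟨i, h, rfl⟩⟩

lemma altLen_insert_last {r : ℕ} (l : Fin (r + 1) → ℝ) (J : Finset (Fin r)) :
    altLen l (insert (Fin.last r) (J.map Fin.castSuccEmb)) =
      altLen (fun i => l i.castSucc) J + (-1) ^ (J.card + 1) * l (Fin.last r) := by
  unfold altLen
  rw [sort_insert_last _ (last_not_mem_map J), sort_map_castSucc, List.map_append,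
    List.map_map]
  simp only [Function.comp_def]
  set A := (J.sort (· ≤ ·)).map (fun i => l i.castSucc) with hA
  have hlen : A.length = J.card := by simp [hA]
  simp only [List.map_cons, List.map_nil, List.length_append, hlen, List.length_singleton]
  rw [Finset.sum_range_succ]
  congr 1
  · refine Finset.sum_congr rfl fun j hj => ?_
    rw [List.getD_append _ _ _ _ (by rw [hlen]; exact Finset.mem_range.mp hj)]
  · rw [List.getD_append_right _ _ _ _ hlen.le]
    simp [hlen]

noncomputable def finsetSnocEquiv (r : ℕ) : Finset (Fin r) × Bool ≃ Finset (Fin (r + 1)) where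
  toFun p := if p.2 then insert (Fin.last r) (p.1.map Fin.castSuccEmb)
             else p.1.map Fin.castSuccEmb
  invFun I := (I.preimage Fin.castSucc (Fin.castSucc_injective r).injOn,
               decide (Fin.last r ∈ I))
  left_inv := by
    rintro ⟨J, b⟩
    have hlm := last_not_mem_map J
    have hfst : ∀ b' : Bool, ((if b' then insert (Fin.last r) (J.map Fin.castSuccEmb)
        else J.map Fin.castSuccEmb).preimage Fin.castSucc
          (Fin.castSucc_injective r).injOn) = J := by
      intro b'
      ext i
      rw [Finset.mem_preimage]
      cases b' with
      | false =>
        simp only [Bool.false_eq_true, if_false]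
        rw [mem_map_castSucc]
      | true =>
        simp only [if_true]
        rw [Finset.mem_insert, mem_map_castSucc]
        simp [(Fin.castSucc_lt_last i).ne]
    cases b <;> refine Prod.ext (hfst _) ?_ <;> simp [hlm]
  right_inv := by
    intro I
    have hpre : ∀ i : Fin r, i ∈ I.preimage Fin.castSucc (Fin.castSucc_injective r).injOn
        ↔ i.castSucc ∈ I := fun i => Finset.mem_preimage
    by_cases h : Fin.last r ∈ I
    · simp only [h, decide_true, if_true]
      ext a
      induction a using Fin.lastCases with
      | last => simp [Finset.mem_insert_self, h]
      | cast i =>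
        rw [Finset.mem_insert, mem_map_castSucc, hpre]
        simp [(Fin.castSucc_lt_last i).ne]
    · simp only [h, decide_false, Bool.false_eq_true, if_false]
      ext a
      induction a using Fin.lastCases with
      | last => exact iff_of_false (last_not_mem_map _) h
      | cast i => rw [mem_map_castSucc, hpre]

lemma list_sum_eq_sum_getD (s : List ℕ) :
    s.sum = ∑ j ∈ Finset.range s.length, s.getD j 0 := by
  induction s with
  | nil => simp
  | cons a t ih =>
    rw [List.sum_cons, List.length_cons, Finset.sum_range_succ', ih]
    simp [add_comm]

lemma sum_range_two_mul {M : Type*} [AddCommMonoid M] (t : ℕ) (g : ℕ → M) :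
    ∑ j ∈ Finset.range (2 * t), g j = ∑ m ∈ Finset.range t, (g (2 * m) + g (2 * m + 1)) := by
  induction t with
  | zero => simp
  | succ n ih =>
    rw [Finset.sum_range_succ, ← ih, show 2 * (n + 1) = (2 * n + 1) + 1 by ring,
      Finset.sum_range_succ, Finset.sum_range_succ, add_assoc]

lemma sig_mod_two {r : ℕ} (I : Finset (Fin r)) (hI : Even I.card) :
    sig I % 2 = ((∑ i ∈ I, (i : ℕ)) + I.card * (I.card + 1) / 2) % 2 := by
  obtain ⟨t, ht⟩ := hI
  have hcard : I.card = 2 * t := by omega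
  set s : List ℕ := (I.sort (· ≤ ·)).map Fin.val with hs
  have hslen : s.length = 2 * t := by simp [hs, Finset.length_sort, hcard]
  have hsum : s.sum = ∑ i ∈ I, (i : ℕ) := by
    rw [hs, ← Multiset.sum_coe, ← Multiset.map_coe, Finset.sort_eq]
    rfl
  have hsorted : s.Pairwise (· ≤ ·) :=
    List.Pairwise.map Fin.val (fun _ _ h => h) (Finset.pairwise_sort I (· ≤ ·))
  have hmono : ∀ m, 2 * m + 1 < s.length → s.getD (2 * m) 0 ≤ s.getD (2 * m + 1) 0 := by
    intro m hm
    rw [List.getD_eq_getElem _ _ (by omega), List.getD_eq_getElem _ _ hm]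
    exact hsorted.rel_get_of_le (a := ⟨2 * m, by omega⟩) (b := ⟨2 * m + 1, hm⟩) (by simp)
  have h1 : sig I % 2 =
      (∑ m ∈ Finset.range t, (s.getD (2 * m + 1) 0 + s.getD (2 * m) 0 + 1)) % 2 := by
    have hsig : sig I = ∑ m ∈ Finset.range (s.length / 2),
        (s.getD (2 * m + 1) 0 - s.getD (2 * m) 0 + 1) := rfl
    rw [hsig, hslen, show 2 * t / 2 = t by omega, Finset.sum_nat_mod,
      Finset.sum_nat_mod _ 2 (fun m => s.getD (2 * m + 1) 0 + s.getD (2 * m) 0 + 1)]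
    congr 1
    refine Finset.sum_congr rfl fun m hm => ?_
    have hm' := Finset.mem_range.mp hm
    have := hmono m (by rw [hslen]; omega)
    omega
  have h2 : ∑ m ∈ Finset.range t, (s.getD (2 * m + 1) 0 + s.getD (2 * m) 0 + 1) =
      s.sum + t := by
    rw [list_sum_eq_sum_getD, hslen, sum_range_two_mul]
    calc ∑ m ∈ Finset.range t, (s.getD (2 * m + 1) 0 + s.getD (2 * m) 0 + 1)
        = ∑ m ∈ Finset.range t, ((s.getD (2 * m) 0 + s.getD (2 * m + 1) 0) + 1) :=
          Finset.sum_congr rfl fun m _ => by ring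
      _ = (∑ m ∈ Finset.range t, (s.getD (2 * m) 0 + s.getD (2 * m + 1) 0)) + t := by
          rw [Finset.sum_add_distrib, Finset.sum_const, smul_eq_mul, mul_one, Finset.card_range]
  have h3 : I.card * (I.card + 1) / 2 = 2 * (t * t) + t := by
    have : I.card * (I.card + 1) = 2 * (2 * (t * t) + t) := by rw [hcard]; ring
    omega
  rw [h1, h2, hsum, h3]
  omega

lemma compl_map {r : ℕ} (J : Finset (Fin r)) :
    (J.map Fin.castSuccEmb)ᶜ = insert (Fin.last r) (Jᶜ.map Fin.castSuccEmb) := by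
  ext a
  induction a using Fin.lastCases with
  | last =>
    exact iff_of_true (Finset.mem_compl.mpr (last_not_mem_map J)) (Finset.mem_insert_self _ _)
  | cast i =>
    rw [Finset.mem_compl, mem_map_castSucc, Finset.mem_insert, mem_map_castSucc,
      Finset.mem_compl]
    simp [(Fin.castSucc_lt_last i).ne]

lemma compl_insert_last {r : ℕ} (J : Finset (Fin r)) :
    (insert (Fin.last r) (J.map Fin.castSuccEmb))ᶜ = Jᶜ.map Fin.castSuccEmb := by
  rw [Finset.compl_insert, compl_map, Finset.erase_insert (last_not_mem_map _)]

lemma neg_one_pow_congr' {n m : ℕ} (h : n % 2 = m % 2) : (-1 : ℝ) ^ n = (-1) ^ m := by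
  conv_lhs => rw [← Nat.div_add_mod n 2]
  conv_rhs => rw [← Nat.div_add_mod m 2]
  rw [pow_add, pow_add, pow_mul, pow_mul]
  norm_num [h]

lemma tri_succ (k : ℕ) : (k + 1) * (k + 2) / 2 = k * (k + 1) / 2 + (k + 1) := by
  have h1 : (k + 1) * (k + 2) = k * (k + 1) + 2 * (k + 1) := by ring
  have h2 : 2 ∣ k * (k + 1) := (Nat.even_mul_succ_self k).two_dvd
  omega

lemma key (r : ℕ) : ∀ l θ : Fin r → ℝ,
    (List.ofFn fun i : Fin r => Amat (l i) (θ i)).prod =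
      ∑ I : Finset (Fin r),
        ((-1 : ℝ) ^ ((∑ i ∈ I, (i : ℕ)) + I.card * (I.card + 1) / 2) *
          (∏ i ∈ I, Real.sin (θ i)) * (∏ i ∈ Iᶜ, Real.cos (θ i))) •
        (Smat (-2 * altLen l I) * Xmat ^ I.card * Dmat ^ (r - I.card)) := by
  induction r with
  | zero =>
    intro l θ
    have huniv : (Finset.univ : Finset (Finset (Fin 0))) = {∅} := by
      ext I
      simp only [Finset.mem_univ, Finset.mem_singleton, true_iff]
      exact Subsingleton.elim _ _
    rw [huniv, Finset.sum_singleton]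
    have haltLen : altLen l ∅ = (0 : ℝ) := by simp [altLen]
    simp [haltLen, Smat_zero]
  | succ r ih =>
    intro l θ
    have hcard : ∀ J : Finset (Fin r), J.card ≤ r :=
      fun J => (Finset.card_le_univ J).trans_eq (Finset.card_fin r)
    -- abbreviations
    set f : Finset (Fin (r + 1)) → Matrix (Fin 2) (Fin 2) ℝ := fun I =>
      ((-1 : ℝ) ^ ((∑ i ∈ I, (i : ℕ)) + I.card * (I.card + 1) / 2) *
        (∏ i ∈ I, Real.sin (θ i)) * (∏ i ∈ Iᶜ, Real.cos (θ i))) •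
      (Smat (-2 * altLen l I) * Xmat ^ I.card * Dmat ^ (r + 1 - I.card)) with hf
    have hrhs : ∑ I : Finset (Fin (r + 1)), f I =
        ∑ J : Finset (Fin r),
          (f (J.map Fin.castSuccEmb) + f (insert (Fin.last r) (J.map Fin.castSuccEmb))) := by
      rw [← Equiv.sum_comp (finsetSnocEquiv r) f, Fintype.sum_prod_type]
      refine Finset.sum_congr rfl fun J _ => ?_
      rw [Fintype.sum_bool]
      rw [show (finsetSnocEquiv r) (J, true) = insert (Fin.last r) (J.map Fin.castSuccEmb)
          from rfl,
        show (finsetSnocEquiv r) (J, false) = J.map Fin.castSuccEmb from rfl]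
      exact add_comm _ _
    rw [List.ofFn_succ', List.prod_concat, ih (fun i => l i.castSucc) (fun i => θ i.castSucc),
      hrhs, Finset.sum_mul]
    refine Finset.sum_congr rfl fun J _ => ?_
    set k := J.card with hk
    set w := altLen (fun i => l i.castSucc) J with hw
    set cJ : ℝ := (-1 : ℝ) ^ ((∑ i ∈ J, (i : ℕ)) + k * (k + 1) / 2) *
        (∏ i ∈ J, Real.sin (θ i.castSucc)) * (∏ i ∈ Jᶜ, Real.cos (θ i.castSucc)) with hcJ
    have hmc : (J.map Fin.castSuccEmb).card = k := Finset.card_map _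
    have hms : ∑ i ∈ J.map Fin.castSuccEmb, (i : ℕ) = ∑ i ∈ J, (i : ℕ) := by
      rw [Finset.sum_map]
      rfl
    have hmsin : ∏ i ∈ J.map Fin.castSuccEmb, Real.sin (θ i) =
        ∏ i ∈ J, Real.sin (θ i.castSucc) := by
      rw [Finset.prod_map]
      rfl
    have hmcos : ∏ i ∈ (J.map Fin.castSuccEmb)ᶜ, Real.cos (θ i) =
        Real.cos (θ (Fin.last r)) * ∏ i ∈ Jᶜ, Real.cos (θ i.castSucc) := by
      rw [compl_map, Finset.prod_insert (last_not_mem_map Jᶜ), Finset.prod_map]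
      rfl
    have hicard : (insert (Fin.last r) (J.map Fin.castSuccEmb)).card = k + 1 := by
      rw [Finset.card_insert_of_notMem (last_not_mem_map J), hmc]
    have hisum : ∑ i ∈ insert (Fin.last r) (J.map Fin.castSuccEmb), (i : ℕ) =
        r + ∑ i ∈ J, (i : ℕ) := by
      rw [Finset.sum_insert (last_not_mem_map J), hms]
      rfl
    have hisin : ∏ i ∈ insert (Fin.last r) (J.map Fin.castSuccEmb), Real.sin (θ i) =
        Real.sin (θ (Fin.last r)) * ∏ i ∈ J, Real.sin (θ i.castSucc) := by
      rw [Finset.prod_insert (last_not_mem_map J), hmsin]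
    have hicos : ∏ i ∈ (insert (Fin.last r) (J.map Fin.castSuccEmb))ᶜ, Real.cos (θ i) =
        ∏ i ∈ Jᶜ, Real.cos (θ i.castSucc) := by
      rw [compl_insert_last, Finset.prod_map]
      rfl
    rw [Amat_decomp, mul_sub, mul_smul_comm, mul_smul_comm, smul_mul_assoc, smul_mul_assoc,
      smul_smul, smul_smul, sub_eq_add_neg, ← neg_smul]
    congr 1
    · -- cos term
      simp only [hf, hmc, hms, hmsin, hmcos, altLen_map]
      rw [show r + 1 - k = (r - k) + 1 by have := hcard J; omega, ← E_mul_D]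
      congr 1
      rw [hcJ]
      ring
    · -- sin term
      simp only [hf, hicard, hisum, hisin, hicos, altLen_insert_last]
      rw [show r + 1 - (k + 1) = r - k by omega, E_mul_SXS, smul_smul]
      have harg : -2 * (w + (-1) ^ (k + 1) * l (Fin.last r)) =
          -2 * w + 2 * (-1) ^ k * l (Fin.last r) := by
        rw [pow_succ]
        ring
      rw [harg]
      congr 1
      have hsgn : (-1 : ℝ) ^ (r + ∑ i ∈ J, (i : ℕ) + (k + 1) * (k + 1 + 1) / 2) =
          (-1 : ℝ) ^ ((∑ i ∈ J, (i : ℕ)) + k * (k + 1) / 2) * ((-1) ^ (r - k) * (-1)) := by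
        rw [← pow_succ, ← pow_add]
        refine neg_one_pow_congr' ?_
        have h1 := tri_succ k
        have h2 := hcard J
        have h3 : (k + 1) * (k + 1 + 1) = (k + 1) * (k + 2) := by norm_num
        omega
      rw [hsgn, hcJ]
      ring

/-- trace formula for even `r`, in `cosh` form. -/
theorem trace_prod_eq_sum_even_subsets_of_even (r : ℕ) (hr : Even r)
    (l θ : Fin r → ℝ) (L : ℝ) :
    Matrix.trace ((List.ofFn fun i : Fin r => Amat (l i) (θ i)).prod * gammaMat L) =
      ∑ I ∈ Finset.univ.filter (fun I : Finset (Fin r) => Even I.card),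
        (-1 : ℝ) ^ sig I * 2 * (∏ i ∈ I, Real.sin (θ i)) * (∏ i ∈ Iᶜ, Real.cos (θ i)) *
          Real.cosh (L / 2 - altLen l I) := by
  have hcard : ∀ J : Finset (Fin r), J.card ≤ r :=
    fun J => (Finset.card_le_univ J).trans_eq (Finset.card_fin r)
  rw [key r l θ, show gammaMat L = Smat L from rfl, Finset.sum_mul, Matrix.trace_sum]
  simp only [smul_mul_assoc, Matrix.trace_smul]
  rw [← Finset.sum_filter_add_sum_filter_not Finset.univ
    (fun I : Finset (Fin r) => Even I.card)]
  have hodd : ∑ I ∈ Finset.univ.filter (fun I : Finset (Fin r) => ¬ Even I.card),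
      ((-1 : ℝ) ^ ((∑ i ∈ I, (i : ℕ)) + I.card * (I.card + 1) / 2) *
        (∏ i ∈ I, Real.sin (θ i)) * (∏ i ∈ Iᶜ, Real.cos (θ i))) •
      Matrix.trace (Smat (-2 * altLen l I) * Xmat ^ I.card * Dmat ^ (r - I.card) * Smat L)
      = 0 := by
    refine Finset.sum_eq_zero fun I hI => ?_
    have hko : Odd I.card := Nat.not_even_iff_odd.mp (Finset.mem_filter.mp hI).2
    have hmo : Odd (r - I.card) := by
      rcases Nat.even_or_odd (r - I.card) with he | ho
      · exact absurd (((Nat.even_sub (hcard I)).mp he).mp hr)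
          (Nat.not_even_iff_odd.mpr hko)
      · exact ho
    rw [Xpow_odd hko, Dpow_odd hmo, trace_SXDS, smul_zero]
  rw [hodd, add_zero]
  refine Finset.sum_congr rfl fun I hI => ?_
  have hke : Even I.card := (Finset.mem_filter.mp hI).2
  have hme : Even (r - I.card) := (Nat.even_sub (hcard I)).mpr (iff_of_true hr hke)
  rw [Xpow_even hke, Dpow_even hme, mul_one, mul_one, trace_SS,
    show (-2 * altLen l I + L) / 2 = L / 2 - altLen l I by ring,
    neg_one_pow_congr' (sig_mod_two I hke).symm, smul_eq_mul]
  ring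
end

section
/- Let r ≥ 0 and let l_1,…,l_r, θ_1,…,θ_r be real numbers. Then the (1,1) entry of the matrix product A(l_1,θ_1)·A(l_2,θ_2)⋯A(l_r,θ_r) equals the sum over all subsets I ⊆ {1,…,r} of even cardinality of (−1)^{s(I)} · sin θ_I · cos θ_{Î} · e^{−L_I}. -/
open Finset

namespace EntryAux

lemma sort_insert_max {n : ℕ} (I : Finset (Fin n)) (b : Fin n)
    (h : ∀ x ∈ I, x < b) (hb : b ∉ I) :
    (insert b I).sort (· ≤ ·) = I.sort (· ≤ ·) ++ [b] := by
  refine (fun (hp : List.Perm _ _) (h1 : List.Pairwise (· ≤ ·) _) (h2 : List.Pairwise (· ≤ ·) _) =>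
    List.Perm.eq_of_pairwise' h1 h2 hp) ?_ ?_ ?_
  · rw [← Multiset.coe_eq_coe]
    rw [Finset.sort_eq, Finset.insert_val_of_notMem hb, ← Multiset.coe_add, Finset.sort_eq,
      ← Multiset.singleton_add, add_comm]
    rfl
  · exact Finset.pairwise_sort _ _
  · rw [List.pairwise_append]
    refine ⟨Finset.pairwise_sort _ _, by simp, ?_⟩
    intro x hx y hy
    simp at hy; subst hy
    exact (h x (by simpa using hx)).le

lemma sort_map_castSucc {n : ℕ} (J : Finset (Fin n)) :
    ((J.map Fin.castSuccEmb).sort (· ≤ ·)) = (J.sort (· ≤ ·)).map Fin.castSucc := by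
  refine (fun (hp : List.Perm _ _) (h1 : List.Pairwise (· ≤ ·) _) (h2 : List.Pairwise (· ≤ ·) _) =>
    List.Perm.eq_of_pairwise' h1 h2 hp) ?_ ?_ ?_
  · rw [← Multiset.coe_eq_coe]
    rw [Finset.sort_eq, Finset.map_val, ← Finset.sort_eq J (· ≤ ·)]
    rfl
  · exact Finset.pairwise_sort _ _
  · exact List.Pairwise.map _ (fun a b h => by simpa using h) (Finset.pairwise_sort _ _)

/-- maximum value of a finset of `Fin n`, as a natural number (0 if empty). -/
def maxv {n : ℕ} (J : Finset (Fin n)) : ℕ :=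
  ((J.sort (· ≤ ·)).map Fin.val).getD (J.card - 1) 0

variable {r : ℕ}

lemma not_last_mem_map (J : Finset (Fin r)) :
    Fin.last r ∉ J.map Fin.castSuccEmb := by
  intro h
  rcases Finset.mem_map.1 h with ⟨x, _, hx⟩
  exact (Fin.castSucc_lt_last x).ne (by simpa using hx)

lemma lt_last_of_mem_map (J : Finset (Fin r)) :
    ∀ x ∈ J.map Fin.castSuccEmb, x < Fin.last r := by
  intro x hx
  rcases Finset.mem_map.1 hx with ⟨y, _, rfl⟩
  exact Fin.castSucc_lt_last y

lemma sort_insert_last (J : Finset (Fin r)) :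
    (insert (Fin.last r) (J.map Fin.castSuccEmb)).sort (· ≤ ·)
      = ((J.sort (· ≤ ·)).map Fin.castSucc) ++ [Fin.last r] := by
  rw [sort_insert_max _ _ (lt_last_of_mem_map J) (not_last_mem_map J), sort_map_castSucc]

lemma vlist_map (J : Finset (Fin r)) :
    ((J.map Fin.castSuccEmb).sort (· ≤ ·)).map Fin.val
      = (J.sort (· ≤ ·)).map Fin.val := by
  rw [sort_map_castSucc, List.map_map]
  rfl

lemma vlist_insert (J : Finset (Fin r)) :
    ((insert (Fin.last r) (J.map Fin.castSuccEmb)).sort (· ≤ ·)).map Fin.val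
      = (J.sort (· ≤ ·)).map Fin.val ++ [r] := by
  rw [sort_insert_last, List.map_append, List.map_map]
  rfl

lemma llist_map (l : Fin (r+1) → ℝ) (J : Finset (Fin r)) :
    ((J.map Fin.castSuccEmb).sort (· ≤ ·)).map l
      = (J.sort (· ≤ ·)).map (fun j => l j.castSucc) := by
  rw [sort_map_castSucc, List.map_map]
  rfl

lemma llist_insert (l : Fin (r+1) → ℝ) (J : Finset (Fin r)) :
    ((insert (Fin.last r) (J.map Fin.castSuccEmb)).sort (· ≤ ·)).map l
      = (J.sort (· ≤ ·)).map (fun j => l j.castSucc) ++ [l (Fin.last r)] := by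
  rw [sort_insert_last, List.map_append, List.map_map]
  rfl

lemma card_map' (J : Finset (Fin r)) : (J.map Fin.castSuccEmb).card = J.card :=
  Finset.card_map _

lemma card_insert_last (J : Finset (Fin r)) :
    (insert (Fin.last r) (J.map Fin.castSuccEmb)).card = J.card + 1 := by
  rw [Finset.card_insert_of_notMem (not_last_mem_map J), card_map']

lemma altLen_map (l : Fin (r+1) → ℝ) (J : Finset (Fin r)) :
    altLen l (J.map Fin.castSuccEmb) = altLen (fun j => l j.castSucc) J := by
  unfold altLen
  rw [llist_map]

lemma altLen_insert (l : Fin (r+1) → ℝ) (J : Finset (Fin r)) :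
    altLen l (insert (Fin.last r) (J.map Fin.castSuccEmb))
      = altLen (fun j => l j.castSucc) J + (-1 : ℝ) ^ (J.card + 1) * l (Fin.last r) := by
  unfold altLen
  rw [llist_insert]
  simp only [List.length_append, List.length_map, Finset.length_sort, List.length_singleton]
  rw [Finset.sum_range_succ]
  congr 1
  · apply Finset.sum_congr rfl
    intro j hj
    rw [Finset.mem_range] at hj
    rw [List.getD_append _ _ _ _ (by simpa using hj)]
  · rw [List.getD_append_right _ _ _ _ (by simp)]
    simp

lemma sig_map (J : Finset (Fin r)) : sig (J.map Fin.castSuccEmb) = sig J := by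
  unfold sig
  rw [vlist_map]

lemma maxv_map (J : Finset (Fin r)) : maxv (J.map Fin.castSuccEmb) = maxv J := by
  unfold maxv
  rw [vlist_map, card_map']

lemma maxv_le (J : Finset (Fin r)) : maxv J ≤ r := by
  unfold maxv
  rcases lt_or_ge (J.card - 1) ((J.sort (· ≤ ·)).map Fin.val).length with h | h
  · rw [List.getD_eq_getElem _ _ h]
    rcases List.mem_map.1 (List.getElem_mem h) with ⟨y, _, hy⟩
    rw [← hy]
    exact y.isLt.le
  · rw [List.getD_eq_default _ _ h]
    exact Nat.zero_le _

lemma maxv_insert_last (J : Finset (Fin r)) :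
    maxv (insert (Fin.last r) (J.map Fin.castSuccEmb)) = r := by
  unfold maxv
  rw [vlist_insert, card_insert_last]
  rw [List.getD_append_right _ _ _ _ (by simp)]
  simp

lemma sig_insert_even (J : Finset (Fin r)) (h : Even J.card) :
    sig (insert (Fin.last r) (J.map Fin.castSuccEmb)) = sig J := by
  unfold sig
  rw [vlist_insert]
  simp only [List.length_append, List.length_map, Finset.length_sort, List.length_singleton]
  obtain ⟨k, hk⟩ := h
  have hcard : J.card = 2 * k := by omega
  have h1 : (2 * k + 1) / 2 = k := by omega
  have h2 : (2 * k) / 2 = k := by omega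
  rw [hcard, h1, h2]
  apply Finset.sum_congr rfl
  intro m hm
  rw [Finset.mem_range] at hm
  rw [List.getD_append _ _ _ _ (by simp only [List.length_map, Finset.length_sort, hcard]; omega),
    List.getD_append _ _ _ _ (by simp only [List.length_map, Finset.length_sort, hcard]; omega)]

lemma sig_insert_odd (J : Finset (Fin r)) (h : Odd J.card) :
    sig (insert (Fin.last r) (J.map Fin.castSuccEmb)) = sig J + (r - maxv J + 1) := by
  unfold sig maxv
  rw [vlist_insert]
  simp only [List.length_append, List.length_map, Finset.length_sort, List.length_singleton]
  obtain ⟨k, hk⟩ := h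
  have hlen : ((J.sort (· ≤ ·)).map Fin.val).length = 2 * k + 1 := by simp [hk]
  have h1 : (2 * k + 1 + 1) / 2 = k + 1 := by omega
  have h2 : (2 * k + 1) / 2 = k := by omega
  rw [hk, h1, h2, Finset.sum_range_succ]
  congr 1
  · apply Finset.sum_congr rfl
    intro m hm
    rw [Finset.mem_range] at hm
    rw [List.getD_append _ _ _ _ (by rw [hlen]; omega),
      List.getD_append _ _ _ _ (by rw [hlen]; omega)]
  · rw [List.getD_append_right _ _ _ _ (by rw [hlen]),
      List.getD_append _ _ _ _ (by rw [hlen]; omega)]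
    rw [hlen]
    have e1 : 2 * k + 1 - (2 * k + 1) = 0 := by omega
    rw [e1]
    have e2 : 2 * k + 1 - 1 = 2 * k := by omega
    rw [e2]
    simp

lemma castSucc_mem_map_iff (J : Finset (Fin r)) (j : Fin r) :
    j.castSucc ∈ J.map Fin.castSuccEmb ↔ j ∈ J := by
  constructor
  · intro h
    rcases Finset.mem_map.1 h with ⟨x, hx, hxx⟩
    have : x = j := Fin.castSucc_injective _ hxx
    subst this; exact hx
  · intro h
    exact Finset.mem_map.2 ⟨j, h, rfl⟩

lemma compl_map (J : Finset (Fin r)) :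
    (J.map Fin.castSuccEmb)ᶜ = insert (Fin.last r) (Jᶜ.map Fin.castSuccEmb) := by
  ext i
  induction i using Fin.lastCases with
  | last => simp [not_last_mem_map J]
  | cast j =>
      rw [Finset.mem_compl, castSucc_mem_map_iff, Finset.mem_insert, castSucc_mem_map_iff,
        Finset.mem_compl]
      exact ⟨Or.inr, fun h => h.resolve_left (Fin.castSucc_lt_last j).ne⟩

lemma compl_insert_last (J : Finset (Fin r)) :
    (insert (Fin.last r) (J.map Fin.castSuccEmb))ᶜ = Jᶜ.map Fin.castSuccEmb := by
  have := compl_map (Jᶜ : Finset (Fin r))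
  rw [compl_compl] at this
  rw [← this, compl_compl]

lemma eq_map_of_not_last_mem (I : Finset (Fin (r+1))) (h : Fin.last r ∉ I) :
    I = (Finset.univ.filter fun j : Fin r => j.castSucc ∈ I).map Fin.castSuccEmb := by
  ext i
  induction i using Fin.lastCases with
  | last => exact iff_of_false h (not_last_mem_map _)
  | cast j =>
      rw [castSucc_mem_map_iff, Finset.mem_filter]
      simp

lemma univ_finset_split :
    (Finset.univ : Finset (Finset (Fin (r+1)))) =
      (Finset.univ.image fun J : Finset (Fin r) => J.map Fin.castSuccEmb) ∪
      (Finset.univ.image fun J : Finset (Fin r) =>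
        insert (Fin.last r) (J.map Fin.castSuccEmb)) := by
  symm
  apply Finset.eq_univ_of_forall
  intro I
  rw [Finset.mem_union]
  by_cases h : Fin.last r ∈ I
  · right
    rw [Finset.mem_image]
    refine ⟨Finset.univ.filter fun j : Fin r => j.castSucc ∈ I, Finset.mem_univ _, ?_⟩
    have h' : Fin.last r ∉ I.erase (Fin.last r) := Finset.notMem_erase _ _
    have := eq_map_of_not_last_mem (I.erase (Fin.last r)) h'
    have hfil : (Finset.univ.filter fun j : Fin r => j.castSucc ∈ I)
        = (Finset.univ.filter fun j : Fin r => j.castSucc ∈ I.erase (Fin.last r)) := by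
      apply Finset.filter_congr
      intro j _
      simp [Finset.mem_erase, (Fin.castSucc_lt_last j).ne]
    rw [hfil, ← this, Finset.insert_erase h]
  · left
    rw [Finset.mem_image]
    exact ⟨_, Finset.mem_univ _, (eq_map_of_not_last_mem I h).symm⟩

lemma sum_split (f : Finset (Fin (r+1)) → ℝ) :
    ∑ I : Finset (Fin (r+1)), f I =
      (∑ J : Finset (Fin r), f (J.map Fin.castSuccEmb)) +
      ∑ J : Finset (Fin r), f (insert (Fin.last r) (J.map Fin.castSuccEmb)) := by
  rw [univ_finset_split, Finset.sum_union, Finset.sum_image, Finset.sum_image]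
  · intro a _ b _ hab
    have h2 := congrArg (fun s => Finset.erase s (Fin.last r)) hab
    simp only at h2
    rw [Finset.erase_insert (not_last_mem_map a), Finset.erase_insert (not_last_mem_map b)] at h2
    exact Finset.map_injective _ h2
  · intro a _ b _ hab
    exact Finset.map_injective _ hab
  · rw [Finset.disjoint_left]
    rintro I hI hI'
    rcases Finset.mem_image.1 hI with ⟨J, _, rfl⟩
    rcases Finset.mem_image.1 hI' with ⟨K, _, hK⟩
    exact not_last_mem_map J (by rw [← hK]; exact Finset.mem_insert_self _ _)

noncomputable def Fsum (r : ℕ) (l θ : Fin r → ℝ) : ℝ :=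
  ∑ I ∈ Finset.univ.filter (fun I : Finset (Fin r) => Even I.card),
    (-1 : ℝ) ^ sig I * (∏ i ∈ I, Real.sin (θ i)) * (∏ i ∈ Iᶜ, Real.cos (θ i)) *
      Real.exp (-altLen l I)

noncomputable def Gsum (r : ℕ) (l θ : Fin r → ℝ) : ℝ :=
  ∑ J ∈ Finset.univ.filter (fun J : Finset (Fin r) => Odd J.card),
    (-1 : ℝ) ^ (sig J + (r - maxv J)) * (∏ i ∈ J, Real.sin (θ i)) *
      (∏ i ∈ Jᶜ, Real.cos (θ i)) * Real.exp (-altLen l J)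

theorem base_F (l θ : Fin 0 → ℝ) : Fsum 0 l θ = 1 := by
  unfold Fsum
  rw [show (Finset.univ : Finset (Finset (Fin 0))) = {∅} from rfl,
    Finset.filter_singleton]
  simp [sig, altLen]

theorem base_G (l θ : Fin 0 → ℝ) : Gsum 0 l θ = 0 := by
  unfold Gsum
  rw [show (Finset.univ : Finset (Finset (Fin 0))) = {∅} from rfl,
    Finset.filter_singleton]
  simp

lemma prod_sin_map (θ : Fin (r+1) → ℝ) (J : Finset (Fin r)) :
    (∏ i ∈ J.map Fin.castSuccEmb, Real.sin (θ i))
      = ∏ j ∈ J, Real.sin (θ j.castSucc) := by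
  rw [Finset.prod_map]
  rfl

lemma prod_cos_compl_map (θ : Fin (r+1) → ℝ) (J : Finset (Fin r)) :
    (∏ i ∈ (J.map Fin.castSuccEmb)ᶜ, Real.cos (θ i))
      = Real.cos (θ (Fin.last r)) * ∏ j ∈ Jᶜ, Real.cos (θ j.castSucc) := by
  rw [compl_map, Finset.prod_insert (not_last_mem_map _), Finset.prod_map]
  rfl

lemma prod_sin_insert (θ : Fin (r+1) → ℝ) (J : Finset (Fin r)) :
    (∏ i ∈ insert (Fin.last r) (J.map Fin.castSuccEmb), Real.sin (θ i))
      = Real.sin (θ (Fin.last r)) * ∏ j ∈ J, Real.sin (θ j.castSucc) := by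
  rw [Finset.prod_insert (not_last_mem_map _), Finset.prod_map]
  rfl

lemma prod_cos_compl_insert (θ : Fin (r+1) → ℝ) (J : Finset (Fin r)) :
    (∏ i ∈ (insert (Fin.last r) (J.map Fin.castSuccEmb))ᶜ, Real.cos (θ i))
      = ∏ j ∈ Jᶜ, Real.cos (θ j.castSucc) := by
  rw [compl_insert_last, Finset.prod_map]
  rfl

lemma Fsum_succ (l θ : Fin (r+1) → ℝ) :
    Fsum (r+1) l θ =
      Fsum r (fun j => l j.castSucc) (fun j => θ j.castSucc) * Real.cos (θ (Fin.last r))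
      + Gsum r (fun j => l j.castSucc) (fun j => θ j.castSucc) *
          (-Real.exp (-l (Fin.last r)) * Real.sin (θ (Fin.last r))) := by
  unfold Fsum Gsum
  rw [Finset.sum_filter, sum_split, Finset.sum_filter, Finset.sum_filter,
    Finset.sum_mul, Finset.sum_mul]
  congr 1
  · apply Finset.sum_congr rfl
    intro J _
    rw [card_map']
    by_cases h : Even J.card
    · rw [if_pos h, if_pos h, sig_map, altLen_map, prod_sin_map, prod_cos_compl_map]
      ring
    · rw [if_neg h, if_neg h, zero_mul]
  · apply Finset.sum_congr rfl
    intro J _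
    rw [card_insert_last]
    by_cases h : Odd J.card
    · rw [if_pos (by rwa [Nat.even_add_one, Nat.not_even_iff_odd]), if_pos h]
      have hpow : ((-1 : ℝ)) ^ (J.card + 1) = 1 := Even.neg_one_pow h.add_one
      have hsig : sig (insert (Fin.last r) (J.map Fin.castSuccEmb))
          = sig J + (r - maxv J) + 1 := by rw [sig_insert_odd _ h]; omega
      rw [altLen_insert, hpow, one_mul, hsig, prod_sin_insert, prod_cos_compl_insert,
        pow_succ, neg_add, Real.exp_add]
      ring
    · rw [if_neg (by rwa [Nat.even_add_one, Nat.not_even_iff_odd]), if_neg h, zero_mul]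

lemma Gsum_succ (l θ : Fin (r+1) → ℝ) :
    Gsum (r+1) l θ =
      Fsum r (fun j => l j.castSucc) (fun j => θ j.castSucc) *
          (-Real.exp (l (Fin.last r)) * Real.sin (θ (Fin.last r)))
      + Gsum r (fun j => l j.castSucc) (fun j => θ j.castSucc) *
          (-Real.cos (θ (Fin.last r))) := by
  unfold Fsum Gsum
  rw [Finset.sum_filter, sum_split, Finset.sum_filter, Finset.sum_filter,
    Finset.sum_mul, Finset.sum_mul]
  rw [add_comm (∑ J : Finset (Fin r),
    (if Even _ then _ else _) * _) _]
  congr 1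
  · apply Finset.sum_congr rfl
    intro J _
    rw [card_map']
    by_cases h : Odd J.card
    · rw [if_pos h, if_pos h, sig_map, altLen_map, maxv_map, prod_sin_map, prod_cos_compl_map]
      have he : r + 1 - maxv J = (r - maxv J) + 1 := by
        have := maxv_le J; omega
      rw [he, ← add_assoc, pow_succ]
      ring
    · rw [if_neg h, if_neg h, zero_mul]
  · apply Finset.sum_congr rfl
    intro J _
    rw [card_insert_last]
    by_cases h : Even J.card
    · rw [if_pos (by rwa [Nat.odd_add_one, Nat.not_odd_iff_even]), if_pos h]
      have hpow : ((-1 : ℝ)) ^ (J.card + 1) = -1 := Odd.neg_one_pow (Even.add_one h)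
      have hsig : sig (insert (Fin.last r) (J.map Fin.castSuccEmb)) = sig J :=
        sig_insert_even _ h
      have hmv : r + 1 - maxv (insert (Fin.last r) (J.map Fin.castSuccEmb)) = 1 := by
        rw [maxv_insert_last]; omega
      rw [altLen_insert, hpow, hsig, maxv_insert_last, prod_sin_insert, prod_cos_compl_insert]
      have he : r + 1 - r = 1 := by omega
      rw [he, pow_succ]
      have hx : -(altLen (fun j => l j.castSucc) J + -1 * l (Fin.last r))
          = -altLen (fun j => l j.castSucc) J + l (Fin.last r) := by ring
      rw [hx, Real.exp_add]
      ring
    · rw [if_neg (by rwa [Nat.odd_add_one, Nat.not_odd_iff_even]), if_neg h, zero_mul]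

theorem both_entries (r : ℕ) (l θ : Fin r → ℝ) :
    ((List.ofFn fun i : Fin r => Amat (l i) (θ i)).prod) 0 0 = Fsum r l θ ∧
    ((List.ofFn fun i : Fin r => Amat (l i) (θ i)).prod) 0 1 = Gsum r l θ := by
  induction r with
  | zero =>
      constructor
      · rw [base_F]
        simp [List.ofFn_zero, Matrix.one_apply]
      · rw [base_G]
        simp [List.ofFn_zero, Matrix.one_apply]
  | succ n ih =>
      obtain ⟨h1, h2⟩ := ih (fun j => l j.castSucc) (fun j => θ j.castSucc)
      have hP : (List.ofFn fun i : Fin (n+1) => Amat (l i) (θ i)).prod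
          = (List.ofFn fun i : Fin n => Amat (l i.castSucc) (θ i.castSucc)).prod *
            Amat (l (Fin.last n)) (θ (Fin.last n)) := by
        rw [List.ofFn_succ']
        simp
      have e00 : Amat (l (Fin.last n)) (θ (Fin.last n)) 0 0 = Real.cos (θ (Fin.last n)) := by
        simp [Amat]
      have e10 : Amat (l (Fin.last n)) (θ (Fin.last n)) 1 0
          = -Real.exp (-l (Fin.last n)) * Real.sin (θ (Fin.last n)) := by
        simp [Amat]
      have e01 : Amat (l (Fin.last n)) (θ (Fin.last n)) 0 1
          = -Real.exp (l (Fin.last n)) * Real.sin (θ (Fin.last n)) := by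
        simp [Amat]
      have e11 : Amat (l (Fin.last n)) (θ (Fin.last n)) 1 1 = -Real.cos (θ (Fin.last n)) := by
        simp [Amat]
      constructor
      · rw [hP, Matrix.mul_apply, Fin.sum_univ_two, e00, e10, h1, h2, Fsum_succ]
      · rw [hP, Matrix.mul_apply, Fin.sum_univ_two, e01, e11, h1, h2, Gsum_succ]

end EntryAux

/-- the (1,1) entry of `A(l_1,θ_1)⋯A(l_r,θ_r)`. -/
theorem entry_one_one_prod (r : ℕ) (l θ : Fin r → ℝ) :
    ((List.ofFn fun i : Fin r => Amat (l i) (θ i)).prod) 0 0 =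
      ∑ I ∈ Finset.univ.filter (fun I : Finset (Fin r) => Even I.card),
        (-1 : ℝ) ^ sig I * (∏ i ∈ I, Real.sin (θ i)) * (∏ i ∈ Iᶜ, Real.cos (θ i)) *
          Real.exp (-altLen l I) := by
  exact (EntryAux.both_entries r l θ).1
end

section
/- Let r ≥ 0 and let l_1,…,l_r, θ_1,…,θ_r be real numbers. Then the (2,2) entry of the matrix product A(l_1,θ_1)·A(l_2,θ_2)⋯A(l_r,θ_r) equals the sum over all subsets I ⊆ {1,…,r} of even cardinality of (−1)^{r + s(I)} · sin θ_I · cos θ_{Î} · e^{L_I}. -/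
open Finset

open Fin.NatCast

def cnt {n : ℕ} (I : Finset (Fin n)) (m : ℕ) : ℕ := (I.filter fun j => j.val < m).card

def st {n : ℕ} (a : Fin 2) (I : Finset (Fin n)) (m : ℕ) : Fin 2 := a + (cnt I m : Fin 2)

lemma cnt_zero {n : ℕ} (I : Finset (Fin n)) : cnt I 0 = 0 := by simp [cnt]

lemma cnt_full {n : ℕ} (I : Finset (Fin n)) {m : ℕ} (h : n ≤ m) : cnt I m = I.card := by
  unfold cnt
  rw [Finset.filter_true_of_mem fun j _ => lt_of_lt_of_le j.isLt h]

def ins {n : ℕ} (p : Finset (Fin n) × Bool) : Finset (Fin (n + 1)) :=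
  if p.2 then insert (Fin.last n) (p.1.map Fin.castSuccEmb) else p.1.map Fin.castSuccEmb

lemma ins_true {n : ℕ} (I : Finset (Fin n)) :
    ins (I, true) = insert (Fin.last n) (I.map Fin.castSuccEmb) := if_pos rfl

lemma ins_false {n : ℕ} (I : Finset (Fin n)) :
    ins (I, false) = I.map Fin.castSuccEmb := rfl

lemma last_not_mem_map_s4 {n : ℕ} (I : Finset (Fin n)) :
    Fin.last n ∉ I.map Fin.castSuccEmb := by
  intro hmem
  obtain ⟨j, -, hj⟩ := Finset.mem_map.mp hmem
  have : (j : ℕ) = n := congrArg Fin.val hj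
  omega

lemma mem_last_ins {n : ℕ} (I : Finset (Fin n)) (t : Bool) :
    Fin.last n ∈ ins (I, t) ↔ t = true := by
  cases t
  · simp only [ins_false, Bool.false_eq_true, iff_false]
    exact last_not_mem_map_s4 I
  · simp [ins_true]

lemma ins_injective (n : ℕ) : Function.Injective (ins (n := n)) := by
  rintro ⟨I, t⟩ ⟨I', t'⟩ h
  have ht : t = t' := by
    rw [← Bool.coe_iff_coe]
    rw [← mem_last_ins I t, ← mem_last_ins I' t', h]
  subst ht
  have hmap : I.map Fin.castSuccEmb = I'.map Fin.castSuccEmb := by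
    cases t with
    | false => rw [← ins_false I, ← ins_false I', h]
    | true =>
      rw [ins_true, ins_true] at h
      have := congrArg (Finset.erase · (Fin.last n)) h
      simpa [Finset.erase_insert_of_ne, Finset.erase_insert (last_not_mem_map_s4 I),
        Finset.erase_insert (last_not_mem_map_s4 I')] using this
  exact Prod.ext (Finset.map_injective _ hmap) rfl

lemma ins_bijective (n : ℕ) : Function.Bijective (ins (n := n)) := by
  rw [Fintype.bijective_iff_injective_and_card]
  refine ⟨ins_injective n, ?_⟩
  simp [Fintype.card_finset, Fintype.card_prod, pow_succ]

lemma cnt_ins_le {n : ℕ} (I : Finset (Fin n)) (t : Bool) {m : ℕ} (hm : m ≤ n) :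
    cnt (ins (I, t)) m = cnt I m := by
  have hcard : cnt (I.map Fin.castSuccEmb) m = cnt I m := by
    unfold cnt
    rw [Finset.filter_map, Finset.card_map]
    rfl
  cases t with
  | false => rw [ins_false]; exact hcard
  | true =>
    rw [ins_true]
    unfold cnt
    rw [Finset.filter_insert, if_neg (by simp [Fin.val_last]; omega)]
    exact hcard

lemma cnt_ins_top {n : ℕ} (I : Finset (Fin n)) (t : Bool) :
    cnt (ins (I, t)) (n + 1) = I.card + (if t then 1 else 0) := by
  unfold cnt
  rw [Finset.filter_true_of_mem fun j _ => j.isLt]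
  cases t with
  | false => simp [ins_false]
  | true => simp [ins_true, Finset.card_insert_of_notMem (last_not_mem_map_s4 I)]

lemma path_expansion (n : ℕ) :
    ∀ (M : Fin n → Matrix (Fin 2) (Fin 2) ℝ) (a b : Fin 2),
    (List.ofFn fun i => M i).prod a b
      = ∑ I : Finset (Fin n),
          (if st a I n = b then ∏ i : Fin n, M i (st a I (i : ℕ)) (st a I ((i : ℕ) + 1))
           else 0) := by
  induction n with
  | zero =>
    intro M a b
    simp [List.ofFn_zero, Matrix.one_apply, st, cnt]
  | succ n IH =>
    intro M a b
    rw [List.ofFn_succ', List.prod_concat, Matrix.mul_apply]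
    have hL := IH (fun i => M i.castSucc) a
    simp only [hL]
    simp_rw [Finset.sum_mul]
    rw [Finset.sum_comm]
    rw [← Fintype.sum_bijective ins (ins_bijective n)
      (fun p => if st a (ins p) (n+1) = b then
        ∏ i : Fin (n+1), M i (st a (ins p) (i : ℕ)) (st a (ins p) ((i : ℕ) + 1)) else 0)
      _ (fun p => rfl)]
    rw [Fintype.sum_prod_type]
    refine Finset.sum_congr rfl fun I _ => ?_
    have hst : ∀ (t : Bool) (m : ℕ), m ≤ n → st a (ins (I, t)) m = st a I m := by
      intro t m hm; unfold st; rw [cnt_ins_le I t hm]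
    have hsttop : ∀ t : Bool, st a (ins (I, t)) (n + 1)
        = st a I n + (if t then 1 else 0) := by
      intro t; unfold st; rw [cnt_ins_top, cnt_full I (le_refl n)]
      push_cast; exact (add_assoc _ _ _).symm
    have hprod : ∀ t : Bool,
        (∏ i : Fin (n + 1), M i (st a (ins (I, t)) (i : ℕ)) (st a (ins (I, t)) ((i : ℕ) + 1)))
          = (∏ i : Fin n, M i.castSucc (st a I (i : ℕ)) (st a I ((i : ℕ) + 1)))
            * M (Fin.last n) (st a I n) (st a I n + (if t then 1 else 0)) := by
      intro t
      rw [Fin.prod_univ_castSucc]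
      congr 1
      · refine Finset.prod_congr rfl fun i _ => ?_
        rw [Fin.coe_castSucc, hst t i (le_of_lt i.isLt), hst t ((i : ℕ) + 1) i.isLt]
      · rw [Fin.val_last, hst t n (le_refl n), hsttop t]
    rw [Fin.sum_univ_two, Fintype.sum_bool]
    rw [hprod true, hprod false, hsttop true, hsttop false]
    have h2 : (1 + 1 : Fin 2) = 0 := rfl
    have h01 : (0 + 1 : Fin 2) = 1 := rfl
    rcases (show st a I n = 0 ∨ st a I n = 1 by omega) with hc | hc <;>
      rcases (show b = 0 ∨ b = 1 by omega) with hb | hb <;>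
        simp [hc, hb, h2, h01]
lemma cnt_rank {n : ℕ} (I : Finset (Fin n)) (j : Fin I.card) :
    cnt I ((I.orderEmbOfFin rfl j : Fin n) : ℕ) = (j : ℕ) := by
  unfold cnt
  have hfil : (I.filter fun x => x.val < ((I.orderEmbOfFin rfl j : Fin n) : ℕ))
      = (Finset.Iio j).map (I.orderEmbOfFin rfl).toEmbedding := by
    ext x
    simp only [Finset.mem_filter, Finset.mem_map, Finset.mem_Iio,
      RelEmbedding.coe_toEmbedding]
    constructor
    · rintro ⟨hxI, hxlt⟩
      have hx : x ∈ Set.range (I.orderEmbOfFin rfl) := by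
        rw [Finset.range_orderEmbOfFin]; exact Finset.mem_coe.mpr hxI
      obtain ⟨j', rfl⟩ := hx
      exact ⟨j', (I.orderEmbOfFin rfl).lt_iff_lt.mp (Fin.lt_def.mpr hxlt), rfl⟩
    · rintro ⟨j', hj', rfl⟩
      exact ⟨Finset.orderEmbOfFin_mem _ _ _,
        Fin.lt_def.mp ((I.orderEmbOfFin rfl).lt_iff_lt.mpr hj')⟩
  rw [hfil, Finset.card_map, Fin.card_Iio]

lemma image_orderEmbOfFin {n : ℕ} (I : Finset (Fin n)) :
    Finset.univ.image (fun j : Fin I.card => I.orderEmbOfFin rfl j) = I := by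
  ext x
  simp only [Finset.mem_image, Finset.mem_univ, true_and]
  constructor
  · rintro ⟨j, rfl⟩; exact Finset.orderEmbOfFin_mem _ _ _
  · intro hx
    have hx' : x ∈ Set.range (I.orderEmbOfFin rfl) := by
      rw [Finset.range_orderEmbOfFin]; exact Finset.mem_coe.mpr hx
    obtain ⟨j, rfl⟩ := hx'
    exact ⟨j, rfl⟩

/-- transfer a sum over `I` to a sum over ranks -/
lemma sum_rank {n : ℕ} (I : Finset (Fin n)) (f : ℕ → Fin n → ℝ) :
    ∑ j : Fin I.card, f (j : ℕ) (I.orderEmbOfFin rfl j)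
      = ∑ i ∈ I, f (cnt I (i : ℕ)) i := by
  refine Finset.sum_bij (fun j _ => I.orderEmbOfFin rfl j) (fun j _ => Finset.orderEmbOfFin_mem _ _ _)
    (fun j₁ _ j₂ _ h => (I.orderEmbOfFin rfl).injective h) ?_ ?_
  · intro i hi
    have hx' : i ∈ Set.range (I.orderEmbOfFin rfl) := by
      rw [Finset.range_orderEmbOfFin]; exact Finset.mem_coe.mpr hi
    obtain ⟨j, rfl⟩ := hx'
    exact ⟨j, Finset.mem_univ j, rfl⟩
  · intro j _
    rw [cnt_rank]

lemma getD_sort {n : ℕ} (I : Finset (Fin n)) (j : Fin I.card) (d : Fin n) :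
    (I.sort (· ≤ ·)).getD (j : ℕ) d = I.orderEmbOfFin rfl j := by
  have hlen : (j : ℕ) < (I.sort (· ≤ ·)).length := by
    rw [Finset.length_sort]; exact j.isLt
  rw [List.getD_eq_getElem _ _ hlen, Finset.orderEmbOfFin_apply]
  simp [Fin.getElem_fin]

lemma altLen_eq {n : ℕ} (l : Fin n → ℝ) (I : Finset (Fin n)) :
    altLen l I = ∑ i ∈ I, (-1 : ℝ) ^ (cnt I (i : ℕ) + 1) * l i := by
  unfold altLen
  rw [← sum_rank I (fun m i => (-1 : ℝ) ^ (m + 1) * l i)]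
  simp only [List.length_map, Finset.length_sort]
  rw [← Fin.sum_univ_eq_sum_range]
  refine Finset.sum_congr rfl fun j _ => ?_
  congr 1
  have hlen : (j : ℕ) < (I.sort (· ≤ ·)).length := by
    rw [Finset.length_sort]; exact j.isLt
  rw [List.getD_eq_getElem _ _ (by simpa using hlen), List.getElem_map]
  rw [Finset.orderEmbOfFin_apply I rfl j]
  simp [Fin.getElem_fin]

lemma neg_one_pow_sub {a b : ℕ} (h : a ≤ b) : (-1 : ℝ) ^ (b - a) = (-1) ^ (b + a) := by
  have hb : b + a = (b - a) + 2 * a := by omega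
  rw [hb, pow_add, pow_mul]
  norm_num

lemma sum_range_double {M : Type*} [AddCommMonoid M] (c : ℕ) (f : ℕ → M) :
    ∑ j ∈ Finset.range (2 * c), f j
      = ∑ m ∈ Finset.range c, (f (2 * m) + f (2 * m + 1)) := by
  induction c with
  | zero => simp
  | succ c ih =>
    rw [Finset.sum_range_succ, ← ih, show 2 * (c + 1) = (2 * c + 1) + 1 by ring,
      Finset.sum_range_succ, Finset.sum_range_succ, add_assoc]

/-- generic version of sum_rank -/
lemma sum_rank' {M : Type*} [AddCommMonoid M] {n : ℕ} (I : Finset (Fin n))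
    (f : ℕ → Fin n → M) :
    ∑ j : Fin I.card, f (j : ℕ) (I.orderEmbOfFin rfl j)
      = ∑ i ∈ I, f (cnt I (i : ℕ)) i := by
  refine Finset.sum_bij (fun j _ => I.orderEmbOfFin rfl j)
    (fun j _ => Finset.orderEmbOfFin_mem _ _ _)
    (fun j₁ _ j₂ _ h => (I.orderEmbOfFin rfl).injective h) ?_ ?_
  · intro i hi
    have hx' : i ∈ Set.range (I.orderEmbOfFin rfl) := by
      rw [Finset.range_orderEmbOfFin]; exact Finset.mem_coe.mpr hi
    obtain ⟨j, rfl⟩ := hx'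
    exact ⟨j, Finset.mem_univ j, rfl⟩
  · intro j _
    rw [cnt_rank]

lemma getD_val_sort {n : ℕ} (I : Finset (Fin n)) (j : Fin I.card) :
    ((I.sort (· ≤ ·)).map Fin.val).getD (j : ℕ) 0 = ((I.orderEmbOfFin rfl j : Fin n) : ℕ) := by
  have hlen : (j : ℕ) < (I.sort (· ≤ ·)).length := by
    rw [Finset.length_sort]; exact j.isLt
  rw [List.getD_eq_getElem _ _ (by simpa using hlen), List.getElem_map]
  rw [Finset.orderEmbOfFin_apply I rfl j]
  simp [Fin.getElem_fin]

lemma neg_one_pow_sig {n : ℕ} (I : Finset (Fin n)) (hk : Even I.card) :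
    (-1 : ℝ) ^ sig I = (-1) ^ (I.card / 2) * (-1) ^ (∑ i ∈ I, (i : ℕ)) := by
  obtain ⟨c, hc⟩ := hk
  unfold sig
  simp only [List.length_map, Finset.length_sort]
  set g : ℕ → ℕ := fun j => ((I.sort (· ≤ ·)).map Fin.val).getD j 0 with hg
  have hdiv : I.card / 2 = c := by omega
  rw [hdiv]
  have hfac : ∀ m ∈ Finset.range c,
      (-1 : ℝ) ^ (g (2 * m + 1) - g (2 * m) + 1) = (-1) ^ (g (2 * m + 1) + g (2 * m) + 1) := by
    intro m hm
    rw [Finset.mem_range] at hm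
    have h1 : 2 * m < I.card := by omega
    have h2 : 2 * m + 1 < I.card := by omega
    have e1 : g (2 * m) = ((I.orderEmbOfFin rfl ⟨2 * m, h1⟩ : Fin n) : ℕ) :=
      getD_val_sort I ⟨2 * m, h1⟩
    have e2 : g (2 * m + 1) = ((I.orderEmbOfFin rfl ⟨2 * m + 1, h2⟩ : Fin n) : ℕ) :=
      getD_val_sort I ⟨2 * m + 1, h2⟩
    have hle : g (2 * m) ≤ g (2 * m + 1) := by
      rw [e1, e2]
      exact Fin.le_def.mp ((I.orderEmbOfFin rfl).le_iff_le.mpr (Fin.mk_le_mk.mpr (by omega)))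
    rw [pow_add, pow_add, neg_one_pow_sub hle]
  rw [← Finset.prod_pow_eq_pow_sum, Finset.prod_congr rfl hfac, Finset.prod_pow_eq_pow_sum]
  have hsum : ∑ m ∈ Finset.range c, (g (2 * m + 1) + g (2 * m) + 1)
      = (∑ j ∈ Finset.range (2 * c), g j) + c := by
    calc ∑ m ∈ Finset.range c, (g (2 * m + 1) + g (2 * m) + 1)
        = ∑ m ∈ Finset.range c, ((g (2 * m) + g (2 * m + 1)) + 1) :=
          Finset.sum_congr rfl fun m _ => by ring
      _ = (∑ m ∈ Finset.range c, (g (2 * m) + g (2 * m + 1)))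
            + ∑ _m ∈ Finset.range c, 1 := Finset.sum_add_distrib
      _ = (∑ j ∈ Finset.range (2 * c), g j) + c := by
          rw [← sum_range_double c g]; simp
  rw [hsum]
  have hsum2 : ∑ j ∈ Finset.range (2 * c), g j = ∑ i ∈ I, (i : ℕ) := by
    have h2c : 2 * c = I.card := by omega
    rw [h2c, ← Fin.sum_univ_eq_sum_range]
    rw [← sum_rank' I (fun _ i => (i : ℕ))]
    exact Finset.sum_congr rfl fun j _ => getD_val_sort I j
  rw [hsum2, pow_add]
  ring

lemma prod_cnt_mem {n : ℕ} (I : Finset (Fin n)) (hk : Even I.card) :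
    ∏ i ∈ I, (-1 : ℝ) ^ cnt I (i : ℕ) = (-1) ^ (I.card / 2) := by
  obtain ⟨c, hc⟩ := hk
  rw [Finset.prod_pow_eq_pow_sum]
  have hsum : ∑ i ∈ I, cnt I (i : ℕ) = ∑ j : Fin I.card, (j : ℕ) :=
    (sum_rank' I (fun m _ => m)).symm
  have hgauss : ∑ j : Fin I.card, (j : ℕ) = c * (2 * c - 1) := by
    rw [Fin.sum_univ_eq_sum_range (fun m => m) I.card]
    have h2 : (∑ i ∈ Finset.range I.card, i) * 2 = I.card * (I.card - 1) :=
      Finset.sum_range_id_mul_two _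
    rw [hc] at h2 ⊢
    have h3 : (c + c) * (c + c - 1) = (c * (2 * c - 1)) * 2 := by
      cases c with
      | zero => simp
      | succ c' =>
        have e1 : (c' + 1) + (c' + 1) - 1 = 2 * c' + 1 := by omega
        have e2 : 2 * (c' + 1) - 1 = 2 * c' + 1 := by omega
        rw [e1, e2]; ring
    omega
  rw [hsum, hgauss]
  have hdiv : I.card / 2 = c := by omega
  rw [hdiv]
  rcases Nat.eq_zero_or_pos c with h0 | hpos
  · simp [h0]
  · have hodd : Odd (2 * c - 1) := by
      refine ⟨c - 1, by omega⟩
    rw [mul_comm, pow_mul, hodd.neg_one_pow]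

lemma prod_cnt_univ {n : ℕ} (I : Finset (Fin n)) (hk : Even I.card) :
    ∏ i : Fin n, (-1 : ℝ) ^ cnt I (i : ℕ) = (-1) ^ (∑ i ∈ I, (i : ℕ)) := by
  rw [Finset.prod_pow_eq_pow_sum]
  have hswap : ∑ i : Fin n, cnt I (i : ℕ) = ∑ j ∈ I, (n - 1 - (j : ℕ)) := by
    unfold cnt
    simp_rw [Finset.card_filter]
    rw [Finset.sum_comm]
    refine Finset.sum_congr rfl fun j _ => ?_
    rw [← Finset.card_filter]
    have hIoi : Finset.univ.filter (fun i : Fin n => (j : ℕ) < (i : ℕ)) = Finset.Ioi j := by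
      ext x
      simp only [Finset.mem_filter, Finset.mem_univ, true_and, Finset.mem_Ioi, Fin.lt_def]
    rw [hIoi, Fin.card_Ioi]
  rw [hswap]
  have : ∀ j ∈ I, (-1 : ℝ) ^ (n - 1 - (j : ℕ)) = (-1) ^ (n - 1) * (-1) ^ (j : ℕ) := by
    intro j _
    rw [neg_one_pow_sub (by omega : (j : ℕ) ≤ n - 1), pow_add]
  rw [← Finset.prod_pow_eq_pow_sum, Finset.prod_congr rfl this, Finset.prod_mul_distrib,
    Finset.prod_const, Finset.prod_pow_eq_pow_sum, ← pow_mul]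
  rw [(hk.mul_left (n-1)).neg_one_pow, one_mul]

lemma prod_cnt_compl {n : ℕ} (I : Finset (Fin n)) (hk : Even I.card) :
    ∏ i ∈ Iᶜ, (-1 : ℝ) ^ cnt I (i : ℕ) = (-1) ^ sig I := by
  have h1 := Finset.prod_mul_prod_compl I (fun i => (-1 : ℝ) ^ cnt I (i : ℕ))
  have hsq : (∏ i ∈ I, (-1 : ℝ) ^ cnt I (i : ℕ)) * (∏ i ∈ I, (-1 : ℝ) ^ cnt I (i : ℕ)) = 1 := by
    rw [← Finset.prod_mul_distrib]
    refine Finset.prod_eq_one fun i _ => ?_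
    rw [← pow_add]
    exact Even.neg_one_pow ⟨cnt I (i : ℕ), rfl⟩
  calc ∏ i ∈ Iᶜ, (-1 : ℝ) ^ cnt I (i : ℕ)
      = ((∏ i ∈ I, (-1 : ℝ) ^ cnt I (i : ℕ)) * (∏ i ∈ I, (-1 : ℝ) ^ cnt I (i : ℕ)))
        * ∏ i ∈ Iᶜ, (-1 : ℝ) ^ cnt I (i : ℕ) := by rw [hsq, one_mul]
    _ = (∏ i ∈ I, (-1 : ℝ) ^ cnt I (i : ℕ)) * ∏ i : Fin n, (-1 : ℝ) ^ cnt I (i : ℕ) := by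
        rw [mul_assoc, h1]
    _ = (-1) ^ (I.card / 2) * (-1) ^ (∑ i ∈ I, (i : ℕ)) := by
        rw [prod_cnt_mem I hk, prod_cnt_univ I hk]
    _ = (-1) ^ sig I := (neg_one_pow_sig I hk).symm

lemma cnt_succ_mem {n : ℕ} (I : Finset (Fin n)) (i : Fin n) (hi : i ∈ I) :
    cnt I ((i : ℕ) + 1) = cnt I (i : ℕ) + 1 := by
  unfold cnt
  have hins : I.filter (fun j => j.val < (i : ℕ) + 1)
      = insert i (I.filter fun j => j.val < (i : ℕ)) := by
    ext x
    simp only [Finset.mem_filter, Finset.mem_insert]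
    constructor
    · rintro ⟨hxI, hx⟩
      rcases eq_or_ne x i with rfl | hne
      · exact Or.inl rfl
      · have hv : x.val ≠ i.val := fun h => hne (Fin.ext h)
        exact Or.inr ⟨hxI, by omega⟩
    · rintro (rfl | ⟨hxI, hx⟩)
      · exact ⟨hi, by omega⟩
      · exact ⟨hxI, by omega⟩
  rw [hins, Finset.card_insert_of_notMem (by simp)]

lemma cnt_succ_not_mem {n : ℕ} (I : Finset (Fin n)) (i : Fin n) (hi : i ∉ I) :
    cnt I ((i : ℕ) + 1) = cnt I (i : ℕ) := by
  unfold cnt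
  congr 1
  ext x
  simp only [Finset.mem_filter, and_congr_right_iff]
  intro hxI
  have hne : x.val ≠ i.val := fun h => hi (Fin.ext h ▸ hxI)
  omega

lemma natCast_fin_two_even {m : ℕ} (hm : Even m) : ((m : ℕ) : Fin 2) = 0 := by
  obtain ⟨q, rfl⟩ := hm
  push_cast
  exact Fin.ext (by simp [Fin.val_add]; omega)

lemma natCast_fin_two_odd {m : ℕ} (hm : Odd m) : ((m : ℕ) : Fin 2) = 1 := by
  obtain ⟨q, rfl⟩ := hm
  push_cast
  simp

lemma Amat_off (l θ : ℝ) (m : ℕ) :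
    Amat l θ (1 + (m : Fin 2)) (1 + (m : Fin 2) + 1)
      = -(Real.exp ((-1 : ℝ) ^ (m + 1) * l)) * Real.sin θ := by
  rcases Nat.even_or_odd m with hm | hm
  · rw [natCast_fin_two_even hm, add_zero, show (1 + 1 : Fin 2) = 0 from rfl,
      Odd.neg_one_pow (hm.add_one), neg_one_mul]
    simp [Amat]
  · rw [natCast_fin_two_odd hm, show (1 + 1 : Fin 2) = 0 from rfl, zero_add,
      Even.neg_one_pow (hm.add_one), one_mul]
    simp [Amat]

lemma Amat_diag (l θ : ℝ) (m : ℕ) :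
    Amat l θ (1 + (m : Fin 2)) (1 + (m : Fin 2)) = (-1 : ℝ) ^ (m + 1) * Real.cos θ := by
  rcases Nat.even_or_odd m with hm | hm
  · rw [natCast_fin_two_even hm, add_zero, Odd.neg_one_pow (hm.add_one), neg_one_mul]
    simp [Amat]
  · rw [natCast_fin_two_odd hm, show (1 + 1 : Fin 2) = 0 from rfl,
      Even.neg_one_pow (hm.add_one), one_mul]
    simp [Amat]

lemma prod_A_path {n : ℕ} (l θ : Fin n → ℝ) (I : Finset (Fin n)) (hk : Even I.card) :
    (∏ i : Fin n, Amat (l i) (θ i) (st 1 I (i : ℕ)) (st 1 I ((i : ℕ) + 1)))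
      = (-1 : ℝ) ^ (n + sig I) * (∏ i ∈ I, Real.sin (θ i)) * (∏ i ∈ Iᶜ, Real.cos (θ i))
        * Real.exp (altLen l I) := by
  rw [← Finset.prod_mul_prod_compl I]
  have hIprod : ∏ i ∈ I, Amat (l i) (θ i) (st 1 I (i : ℕ)) (st 1 I ((i : ℕ) + 1))
      = ∏ i ∈ I, ((-1 : ℝ) * Real.exp ((-1 : ℝ) ^ (cnt I (i : ℕ) + 1) * l i)
          * Real.sin (θ i)) := by
    refine Finset.prod_congr rfl fun i hi => ?_
    have h1 : st 1 I ((i : ℕ) + 1) = st 1 I (i : ℕ) + 1 := by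
      unfold st; rw [cnt_succ_mem I i hi]; push_cast; exact (add_assoc _ _ _).symm
    rw [h1]
    have := Amat_off (l i) (θ i) (cnt I (i : ℕ))
    unfold st
    rw [this]
    ring
  have hCprod : ∏ i ∈ Iᶜ, Amat (l i) (θ i) (st 1 I (i : ℕ)) (st 1 I ((i : ℕ) + 1))
      = ∏ i ∈ Iᶜ, ((-1 : ℝ) ^ (cnt I (i : ℕ) + 1) * Real.cos (θ i)) := by
    refine Finset.prod_congr rfl fun i hi => ?_
    have hnot : i ∉ I := Finset.mem_compl.mp hi
    have h1 : st 1 I ((i : ℕ) + 1) = st 1 I (i : ℕ) := by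
      unfold st; rw [cnt_succ_not_mem I i hnot]
    rw [h1]
    have := Amat_diag (l i) (θ i) (cnt I (i : ℕ))
    unfold st
    rw [this]
  rw [hIprod, hCprod]
  have e1 : ∏ i ∈ I, ((-1 : ℝ) * Real.exp ((-1 : ℝ) ^ (cnt I (i : ℕ) + 1) * l i)
      * Real.sin (θ i))
      = (-1 : ℝ) ^ I.card * Real.exp (altLen l I) * ∏ i ∈ I, Real.sin (θ i) := by
    rw [Finset.prod_mul_distrib, Finset.prod_mul_distrib, Finset.prod_const]
    rw [altLen_eq l I, Real.exp_sum]
  have e2 : ∏ i ∈ Iᶜ, ((-1 : ℝ) ^ (cnt I (i : ℕ) + 1) * Real.cos (θ i))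
      = (-1 : ℝ) ^ sig I * (-1 : ℝ) ^ (Iᶜ.card) * ∏ i ∈ Iᶜ, Real.cos (θ i) := by
    rw [Finset.prod_mul_distrib]
    congr 1
    have : ∀ i ∈ Iᶜ, (-1 : ℝ) ^ (cnt I (i : ℕ) + 1) = (-1 : ℝ) ^ (cnt I (i : ℕ)) * (-1) :=
      fun i _ => pow_succ _ _
    rw [Finset.prod_congr rfl this, Finset.prod_mul_distrib, Finset.prod_const,
      prod_cnt_compl I hk]
  rw [e1, e2]
  have hsign : (-1 : ℝ) ^ I.card * (-1 : ℝ) ^ (Iᶜ.card) = (-1 : ℝ) ^ n := by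
    rw [← pow_add]
    congr 1
    have h1 : Iᶜ.card = n - I.card := by
      rw [Finset.card_compl, Fintype.card_fin]
    have h2 : I.card ≤ n := by
      have := Finset.card_le_univ I
      rwa [Fintype.card_fin] at this
    omega
  calc (-1 : ℝ) ^ I.card * Real.exp (altLen l I) * (∏ i ∈ I, Real.sin (θ i)) *
        ((-1 : ℝ) ^ sig I * (-1 : ℝ) ^ (Iᶜ.card) * ∏ i ∈ Iᶜ, Real.cos (θ i))
      = ((-1 : ℝ) ^ I.card * (-1 : ℝ) ^ (Iᶜ.card)) * (-1 : ℝ) ^ sig I *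
        (∏ i ∈ I, Real.sin (θ i)) * (∏ i ∈ Iᶜ, Real.cos (θ i)) * Real.exp (altLen l I) := by
        ring
    _ = _ := by rw [hsign, ← pow_add]

/-- the (2,2) entry of `A(l_1,θ_1)⋯A(l_r,θ_r)`. -/
theorem entry_two_two_prod (r : ℕ) (l θ : Fin r → ℝ) :
    ((List.ofFn fun i : Fin r => Amat (l i) (θ i)).prod) 1 1 =
      ∑ I ∈ Finset.univ.filter (fun I : Finset (Fin r) => Even I.card),
        (-1 : ℝ) ^ (r + sig I) * (∏ i ∈ I, Real.sin (θ i)) * (∏ i ∈ Iᶜ, Real.cos (θ i)) *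
          Real.exp (altLen l I) := by
  rw [path_expansion r (fun i => Amat (l i) (θ i)) 1 1, Finset.sum_filter]
  refine Finset.sum_congr rfl fun I _ => ?_
  have hcond : (st 1 I r = 1) ↔ Even I.card := by
    unfold st
    rw [cnt_full I (le_refl r)]
    constructor
    · intro h
      have h0 : ((I.card : ℕ) : Fin 2) = 0 := by
        have := add_left_cancel (a := (1 : Fin 2)) (b := ((I.card : ℕ) : Fin 2)) (c := 0)
        exact this (by rw [add_zero]; exact h)
      rcases Nat.even_or_odd I.card with he | ho
      · exact he
      · rw [natCast_fin_two_odd ho] at h0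
        exact absurd h0 (by decide)
    · intro he
      rw [natCast_fin_two_even he, add_zero]
  by_cases hI : Even I.card
  · rw [if_pos (hcond.mpr hI), if_pos hI]
    exact prod_A_path l θ I hI
  · rw [if_neg (fun h => hI (hcond.mp h)), if_neg hI]
end

section
/- Let n ≥ 1, let f_1,…,f_n be invertible 2×2 real matrices, let γ be any 2×2 real matrix, and define T : ℝ → ℝ by T(z) = Tr( (f_1⁻¹ S(z) f_1)·(f_2⁻¹ S(z) f_2)⋯(f_n⁻¹ S(z) f_n)·γ ). Set A_i = f_i⁻¹ D f_i for 1 ≤ i ≤ n. Then for every k ≥ 0, the k-th derivative of T at 0 equals 2^{−k} · Σ_{p ∈ P(k,n)} (k choose p) · Tr( A_1^{[p_1]} · A_2^{[p_2]} ⋯ A_n^{[p_n]} · γ ), where A^0 denotes the identity matrix and A^1 = A. -/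
open Finset

/-! ### Auxiliary material -/

section Aux

attribute [local instance] Matrix.linftyOpNormedRing Matrix.linftyOpNormedAlgebra

abbrev M2 := Matrix (Fin 2) (Fin 2) ℝ

/-- Bump a tuple at one index. -/
def bump {n : ℕ} (p : Fin n → ℕ) (j : Fin n) : Fin n → ℕ :=
  fun i => p i + if i = j then 1 else 0

/-- Unbump a tuple at one index. -/
def unbump {n : ℕ} (q : Fin n → ℕ) (j : Fin n) : Fin n → ℕ :=
  fun i => q i - if i = j then 1 else 0

lemma sum_bump {n : ℕ} (p : Fin n → ℕ) (j : Fin n) :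
    ∑ i, bump p j i = (∑ i, p i) + 1 := by
  simp [bump, Finset.sum_add_distrib]

lemma unbump_bump {n : ℕ} (p : Fin n → ℕ) (j : Fin n) : unbump (bump p j) j = p := by
  funext i; by_cases h : i = j <;> simp [bump, unbump, h]

lemma bump_unbump {n : ℕ} (q : Fin n → ℕ) (j : Fin n) (h : q j ≠ 0) :
    bump (unbump q j) j = q := by
  funext i; by_cases hi : i = j <;> simp [bump, unbump, hi]
  omega

lemma pascal {n k : ℕ} (q : Fin n → ℕ) (hq : ∑ i, q i = k + 1) :
    ∑ j : Fin n, (if q j ≠ 0 then Nat.multinomial Finset.univ (unbump q j) else 0)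
      = Nat.multinomial Finset.univ q := by
  have hP : 0 < ∏ i, Nat.factorial (q i) := Finset.prod_pos fun i _ => (q i).factorial_pos
  refine Nat.eq_of_mul_eq_mul_right hP ?_
  rw [Finset.sum_mul]
  have hterm : ∀ j : Fin n,
      (if q j ≠ 0 then Nat.multinomial Finset.univ (unbump q j) else 0)
          * ∏ i, Nat.factorial (q i)
        = q j * Nat.factorial k := by
    intro j
    by_cases h : q j = 0
    · simp [h]
    · rw [if_pos h]
      have hu : ∑ i, unbump q j i = k := by
        have := sum_bump (unbump q j) j
        rw [bump_unbump q j h] at this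
        omega
      have hprod : ∏ i, Nat.factorial (q i)
          = q j * ∏ i, Nat.factorial (unbump q j i) := by
        rw [← Finset.prod_erase_mul _ _ (Finset.mem_univ j),
            ← Finset.prod_erase_mul _ _ (Finset.mem_univ j)]
        have : ∀ i ∈ Finset.univ.erase j,
            Nat.factorial (q i) = Nat.factorial (unbump q j i) := by
          intro i hi
          rw [show unbump q j i = q i by
            simp [unbump, Finset.ne_of_mem_erase hi]]
        rw [Finset.prod_congr rfl this, mul_comm (q j), mul_assoc]
        congr 1
        have : unbump q j j = q j - 1 := by simp [unbump]
        rw [this, mul_comm, Nat.mul_factorial_pred h]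
      rw [hprod, mul_comm (q j), ← mul_assoc,
        mul_comm (Nat.multinomial Finset.univ (unbump q j)), Nat.multinomial_spec, hu, mul_comm]
  rw [Finset.sum_congr rfl fun j _ => hterm j, ← Finset.sum_mul, hq,
    mul_comm (Nat.multinomial Finset.univ q), Nat.multinomial_spec, hq, Nat.factorial_succ]

lemma sum_Pkn_succ {n k : ℕ} (X : (Fin n → ℕ) → ℝ) :
    ∑ p ∈ Pkn k n, (Nat.multinomial Finset.univ p : ℝ) * ∑ j : Fin n, X (bump p j)
      = ∑ q ∈ Pkn (k+1) n, (Nat.multinomial Finset.univ q : ℝ) * X q := by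
  have lhs : ∑ p ∈ Pkn k n, (Nat.multinomial Finset.univ p : ℝ) * ∑ j : Fin n, X (bump p j)
      = ∑ x ∈ (Pkn k n) ×ˢ (Finset.univ : Finset (Fin n)),
          (Nat.multinomial Finset.univ x.1 : ℝ) * X (bump x.1 x.2) := by
    rw [Finset.sum_product]
    exact Finset.sum_congr rfl fun p _ => by rw [Finset.mul_sum]
  rw [lhs]
  rw [show ∑ q ∈ Pkn (k+1) n, (Nat.multinomial Finset.univ q : ℝ) * X q
      = ∑ x ∈ ((Pkn (k+1) n) ×ˢ (Finset.univ : Finset (Fin n))).filter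
          (fun x => x.1 x.2 ≠ 0),
          (Nat.multinomial Finset.univ (unbump x.1 x.2) : ℝ) * X x.1 by
    rw [Finset.sum_filter, Finset.sum_product]
    refine Finset.sum_congr rfl fun q hq => ?_
    have hsq : ∑ i, q i = k + 1 := (Finset.Nat.mem_antidiagonalTuple).mp hq
    rw [show ∑ j : Fin n,
          (if q j ≠ 0 then (Nat.multinomial Finset.univ (unbump q j) : ℝ) * X q else 0)
        = (∑ j : Fin n, (if q j ≠ 0 then (Nat.multinomial Finset.univ (unbump q j) : ℝ)
            else 0)) * X q by
      rw [Finset.sum_mul]; exact Finset.sum_congr rfl fun j _ => by split <;> simp]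
    congr 1
    rw [← pascal q hsq]
    push_cast [apply_ite (Nat.cast : ℕ → ℝ)]
    rfl]
  refine Finset.sum_nbij' (fun x => (bump x.1 x.2, x.2)) (fun x => (unbump x.1 x.2, x.2))
    ?_ ?_ ?_ ?_ ?_
  · rintro ⟨p, j⟩ hp
    simp only [Finset.mem_filter, Finset.mem_product, Finset.mem_univ, and_true] at hp ⊢
    refine ⟨Finset.Nat.mem_antidiagonalTuple.mpr ?_, by simp [bump]⟩
    rw [sum_bump, Finset.Nat.mem_antidiagonalTuple.mp hp]
  · rintro ⟨q, j⟩ hq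
    simp only [Finset.mem_filter, Finset.mem_product, Finset.mem_univ, and_true] at hq ⊢
    obtain ⟨hq1, hq2⟩ := hq
    refine Finset.Nat.mem_antidiagonalTuple.mpr ?_
    have := sum_bump (unbump q j) j
    rw [bump_unbump q j hq2] at this
    have hsq : ∑ i, q i = k + 1 := Finset.Nat.mem_antidiagonalTuple.mp hq1
    omega
  · rintro ⟨p, j⟩ _; simp [unbump_bump]
  · rintro ⟨q, j⟩ hq
    simp only [Finset.mem_filter] at hq
    simp [bump_unbump q j hq.2]
  · rintro ⟨p, j⟩ _
    simp [unbump_bump]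

lemma hasDerivAt_ofFn_prod {𝔸 : Type*} [NormedRing 𝔸] [NormedAlgebra ℝ 𝔸] :
    ∀ {n : ℕ} (F G : Fin n → ℝ → 𝔸) (z : ℝ),
    (∀ i, HasDerivAt (F i) (G i z) z) →
    HasDerivAt (fun z => (List.ofFn fun i => F i z).prod)
      (∑ j : Fin n, (List.ofFn fun i => if i = j then G i z else F i z).prod) z := by
  intro n
  induction n with
  | zero => intro F G z h; simpa using hasDerivAt_const z (1 : 𝔸)
  | succ m ih =>
    intro F G z h
    have ht := ih (fun i => F i.succ) (fun i => G i.succ) z (fun i => h i.succ)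
    have key := (h 0).mul ht
    simp only [List.ofFn_succ, List.prod_cons]
    rw [Fin.sum_univ_succ]
    convert key using 2
    have h0 : ∀ x : Fin m, (0 : Fin (m+1)) ≠ x.succ := fun x => (Fin.succ_ne_zero x).symm
    simp [h0, Finset.mul_sum]
    · exact congrArg₂ (· * ·) (if_pos rfl)
        (congrArg (fun g => (List.ofFn g).prod) (funext fun i => if_neg (Fin.succ_ne_zero i)))
    · simp only [Fin.succ_inj]; rw [Finset.mul_sum]
      exact Finset.sum_congr rfl fun x _ => congrArg (· * _) (if_neg (Fin.succ_ne_zero x).symm)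

lemma ofFn_prod_smul {𝔸 : Type*} [NormedRing 𝔸] [NormedAlgebra ℝ 𝔸] :
    ∀ {n : ℕ} (c : ℝ) (A B : Fin n → 𝔸) (j : Fin n),
    (List.ofFn fun i => if i = j then c • B i else A i).prod
      = c • (List.ofFn fun i => if i = j then B i else A i).prod := by
  intro n
  induction n with
  | zero => exact fun c A B j => j.elim0
  | succ m ih =>
    intro c A B j
    induction j using Fin.cases with
    | zero => simp [List.ofFn_succ, Fin.succ_ne_zero, smul_mul_assoc]
    | succ j0 =>
      simp only [List.ofFn_succ, List.prod_cons, (Fin.succ_ne_zero j0).symm, if_neg,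
        Fin.succ_inj]
      simp only [if_false]
      rw [ih c (fun i => A i.succ) (fun i => B i.succ) j0, mul_smul_comm]

lemma hasDerivAt_Smat (z : ℝ) : HasDerivAt Smat ((1/2 : ℝ) • (Smat z * Dmat)) z := by
  have h1 : HasDerivAt (fun z : ℝ => Real.exp (z / 2)) (Real.exp (z / 2) * (1/2)) z := by
    simpa [Function.comp_def] using (Real.hasDerivAt_exp (z/2)).comp z ((hasDerivAt_id z).div_const 2)
  have h2 : HasDerivAt (fun z : ℝ => Real.exp (-(z / 2))) (Real.exp (-(z / 2)) * (-(1/2))) z := by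
    have : HasDerivAt (fun z : ℝ => -(z/2)) (-(1/2)) z := ((hasDerivAt_id z).div_const 2).neg
    simpa [Function.comp_def] using (Real.hasDerivAt_exp (-(z/2))).comp z this
  have hS : Smat = fun z => Real.exp (z/2) • (!![1,0;0,0] : M2)
      + Real.exp (-(z/2)) • (!![0,0;0,1] : M2) := by
    funext z; ext i j; fin_cases i <;> fin_cases j <;> simp [Smat]
  rw [hS]
  have := (h1.smul_const (!![1,0;0,0] : M2)).add (h2.smul_const (!![0,0;0,1] : M2))
  refine this.congr_deriv ?_
  ext i j; fin_cases i <;> fin_cases j <;>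
    simp [Smat, Dmat, Matrix.mul_apply, Fin.sum_univ_two] <;> ring

/-- The basic factor `f⁻¹ S(z) Dᵖ f`. -/
noncomputable def gfun {n : ℕ} (f : Fin n → M2) (i : Fin n) (p : ℕ) (z : ℝ) : M2 :=
  (f i)⁻¹ * Smat z * Dmat ^ p * f i

lemma hasDerivAt_gfun {n : ℕ} (f : Fin n → M2) (i : Fin n) (p : ℕ) (z : ℝ) :
    HasDerivAt (gfun f i p) ((1/2 : ℝ) • gfun f i (p+1) z) z := by
  have h := ((hasDerivAt_Smat z).const_mul ((f i)⁻¹)).mul_const (Dmat ^ p * f i)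
  have e : gfun f i p = fun y => (f i)⁻¹ * Smat y * (Dmat ^ p * f i) := by
    funext w; simp [gfun, mul_assoc]
  rw [e]; refine h.congr_deriv ?_; symm
  · simp only [gfun, mul_smul_comm, smul_mul_assoc]
    congr 1
    rw [pow_succ']
    simp [mul_assoc]

/-- Trace as a continuous linear map. -/
noncomputable def trCLM : M2 →L[ℝ] ℝ :=
  LinearMap.toContinuousLinearMap (Matrix.traceLinearMap (Fin 2) ℝ ℝ)

lemma trCLM_apply (M : M2) : trCLM M = Matrix.trace M := rfl

lemma hasDerivAt_Tp {n : ℕ} (f : Fin n → M2) (γ : M2) (p : Fin n → ℕ) (z : ℝ) :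
    HasDerivAt (fun z => Matrix.trace ((List.ofFn fun i => gfun f i (p i) z).prod * γ))
      ((1/2 : ℝ) * ∑ j : Fin n,
        Matrix.trace ((List.ofFn fun i => gfun f i (bump p j i) z).prod * γ)) z := by
  have h := hasDerivAt_ofFn_prod (fun i z => gfun f i (p i) z)
      (fun i z => (1/2 : ℝ) • gfun f i (p i + 1) z) z (fun i => hasDerivAt_gfun f i (p i) z)
  have h2 := h.mul_const γ
  have h3 := trCLM.hasFDerivAt.comp_hasDerivAt z h2
  have key : ∀ j : Fin n,
      (List.ofFn fun i =>
          if i = j then (1/2 : ℝ) • gfun f i (p i + 1) z else gfun f i (p i) z).prod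
        = (1/2 : ℝ) • (List.ofFn fun i => gfun f i (bump p j i) z).prod := by
    intro j
    rw [ofFn_prod_smul]
    have : (fun i => if i = j then gfun f i (p i + 1) z else gfun f i (p i) z)
        = fun i => gfun f i (bump p j i) z := by
      funext i; by_cases hij : i = j <;> simp [bump, hij]
    rw [this]
  refine h3.congr_deriv ?_; symm
  simp only [key, trCLM_apply, Finset.sum_mul, smul_mul_assoc, map_sum, map_smul,
    smul_eq_mul, Finset.mul_sum]
  show _ = Matrix.trace (_ : M2)
  simp [Matrix.trace_sum, Matrix.trace_smul]

lemma main_induction {n : ℕ} (f : Fin n → M2) (γ : M2) (k : ℕ) (z : ℝ) :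
    iteratedDeriv k
        (fun z : ℝ => Matrix.trace ((List.ofFn fun i => gfun f i 0 z).prod * γ)) z
      = (1 / 2 ^ k : ℝ) * ∑ p ∈ Pkn k n, (Nat.multinomial Finset.univ p : ℝ) *
          Matrix.trace ((List.ofFn fun i => gfun f i (p i) z).prod * γ) := by
  induction k generalizing z with
  | zero =>
    rw [iteratedDeriv_zero]
    rw [show Pkn 0 n = {0} from Finset.Nat.antidiagonalTuple_zero_right n,
      Finset.sum_singleton]
    simp [Nat.multinomial]
  | succ k ih =>
    rw [iteratedDeriv_succ, funext fun z => ih z]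
    have H : HasDerivAt (fun z => (1 / 2 ^ k : ℝ) * ∑ p ∈ Pkn k n,
        (Nat.multinomial Finset.univ p : ℝ) *
          Matrix.trace ((List.ofFn fun i => gfun f i (p i) z).prod * γ))
        ((1 / 2 ^ k : ℝ) * ∑ p ∈ Pkn k n, (Nat.multinomial Finset.univ p : ℝ) *
          ((1/2 : ℝ) * ∑ j : Fin n,
            Matrix.trace ((List.ofFn fun i => gfun f i (bump p j i) z).prod * γ))) z := by
      exact (HasDerivAt.fun_sum fun p _ =>
        (hasDerivAt_Tp f γ p z).const_mul (Nat.multinomial Finset.univ p : ℝ)).const_mul _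
    rw [H.deriv]
    have : ∑ p ∈ Pkn k n, (Nat.multinomial Finset.univ p : ℝ) *
          ((1/2 : ℝ) * ∑ j : Fin n,
            Matrix.trace ((List.ofFn fun i => gfun f i (bump p j i) z).prod * γ))
        = (1/2 : ℝ) * ∑ p ∈ Pkn k n, (Nat.multinomial Finset.univ p : ℝ) *
            ∑ j : Fin n,
              Matrix.trace ((List.ofFn fun i => gfun f i (bump p j i) z).prod * γ) := by
      rw [Finset.mul_sum]; exact Finset.sum_congr rfl fun p _ => by ring
    rw [this, sum_Pkn_succ fun q =>
      Matrix.trace ((List.ofFn fun i => gfun f i (q i) z).prod * γ)]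
    rw [← mul_assoc]
    congr 1
    rw [pow_succ]
    ring

lemma gfun_zero_eq {n : ℕ} (f : Fin n → M2) (hf : ∀ i, IsUnit (f i)) (i : Fin n) (m : ℕ) :
    gfun f i m 0 = ((f i)⁻¹ * Dmat * f i) ^ (m % 2) := by
  have hS0 : Smat 0 = 1 := by
    ext a b; fin_cases a <;> fin_cases b <;> simp [Smat, Matrix.one_apply]
  have hD2 : Dmat ^ 2 = 1 := by
    ext a b; fin_cases a <;> fin_cases b <;>
      simp [Dmat, pow_two, Matrix.mul_apply, Fin.sum_univ_two, Matrix.one_apply]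
  have hDm : Dmat ^ m = Dmat ^ (m % 2) := by
    conv_lhs => rw [← Nat.div_add_mod m 2]
    rw [pow_add, pow_mul, hD2, one_pow, one_mul]
  have hinv : (f i)⁻¹ * f i = 1 :=
    Matrix.nonsing_inv_mul _ ((Matrix.isUnit_iff_isUnit_det _).mp (hf i))
  rcases Nat.mod_two_eq_zero_or_one m with h | h <;>
    simp [gfun, hS0, hDm, h, mul_one, hinv, pow_one]

end Aux

/-- product-rule expansion of the `k`-th derivative of the trace function,
with the derivatives of `fᵢ⁻¹ S(z) fᵢ` evaluated in terms of parities. -/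
theorem iteratedDeriv_trace_eq_sum_partitions (n k : ℕ) (hn : 1 ≤ n)
    (f : Fin n → Matrix (Fin 2) (Fin 2) ℝ) (hf : ∀ i, IsUnit (f i))
    (γ : Matrix (Fin 2) (Fin 2) ℝ) :
    iteratedDeriv k
      (fun z : ℝ =>
        Matrix.trace ((List.ofFn fun i : Fin n => (f i)⁻¹ * Smat z * f i).prod * γ)) 0 =
    (1 / 2 ^ k : ℝ) * ∑ p ∈ Pkn k n, (Nat.multinomial Finset.univ p : ℝ) *
        Matrix.trace
          ((List.ofFn fun i : Fin n => ((f i)⁻¹ * Dmat * f i) ^ (p i % 2)).prod * γ) := by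
  have hfun : (fun z : ℝ =>
        Matrix.trace ((List.ofFn fun i : Fin n => (f i)⁻¹ * Smat z * f i).prod * γ))
      = fun z : ℝ => Matrix.trace ((List.ofFn fun i => gfun f i 0 z).prod * γ) := by
    funext z
    congr 2
    funext i
    simp [gfun]
  rw [hfun, main_induction f γ k 0]
  congr 1
  refine Finset.sum_congr rfl fun p _ => ?_
  have : (fun i : Fin n => gfun f i (p i) 0)
      = fun i : Fin n => ((f i)⁻¹ * Dmat * f i) ^ (p i % 2) :=
    funext fun i => gfun_zero_eq f hf i (p i)
  rw [this]
end

section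
/- Let l_1, l_2, θ_1, θ_2, L be real numbers. Then Tr( A(l_1,θ_1) · A(l_2,θ_2) · γ_L ) = 2( cos θ_1 cos θ_2 cosh(L/2) + sin θ_1 sin θ_2 cosh(L/2 − (l_2 − l_1)) ). -/
open Finset

/-- `Tr(A(l₁,θ₁)·A(l₂,θ₂)·γ_L)`. -/
theorem trace_Amat_Amat_gammaMat (l₁ l₂ θ₁ θ₂ L : ℝ) :
    Matrix.trace (Amat l₁ θ₁ * Amat l₂ θ₂ * gammaMat L) =
      2 * (Real.cos θ₁ * Real.cos θ₂ * Real.cosh (L / 2) +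
        Real.sin θ₁ * Real.sin θ₂ * Real.cosh (L / 2 - (l₂ - l₁))) := by
  simp only [Amat, gammaMat, Matrix.trace_fin_two, Matrix.mul_apply, Fin.sum_univ_two,
    Matrix.cons_val', Matrix.cons_val_zero, Matrix.cons_val_one, Matrix.head_cons,
    Matrix.empty_val', Matrix.cons_val_fin_one, Real.cosh_eq, Matrix.of_apply,
    Matrix.head_fin_const]
  rw [show -(L / 2 - (l₂ - l₁)) = (-(L/2) + l₂) - l₁ by ring,
    show L / 2 - (l₂ - l₁) = (L/2 + l₁) - l₂ by ring,
    Real.exp_sub, Real.exp_sub, Real.exp_add, Real.exp_add, Real.exp_neg l₁, Real.exp_neg l₂]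
  have h1 := Real.exp_ne_zero l₁
  have h2 := Real.exp_ne_zero l₂
  field_simp
  ring
end

section
/- Let l_1, l_2, l_3, θ_1, θ_2, θ_3, L be real numbers. Then Tr( A(l_1,θ_1) · A(l_2,θ_2) · A(l_3,θ_3) · γ_L ) = 2 sinh(L/2) cos θ_1 cos θ_2 cos θ_3 + 2 sinh(L/2 − (l_2 − l_1)) sin θ_1 sin θ_2 cos θ_3 − 2 sinh(L/2 − (l_3 − l_1)) sin θ_1 cos θ_2 sin θ_3 + 2 sinh(L/2 − (l_3 − l_2)) cos θ_1 sin θ_2 sin θ_3. -/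
open Finset

/-- `Tr(A(l₁,θ₁)·A(l₂,θ₂)·A(l₃,θ₃)·γ_L)`. -/
theorem trace_Amat_Amat_Amat_gammaMat (l₁ l₂ l₃ θ₁ θ₂ θ₃ L : ℝ) :
    Matrix.trace (Amat l₁ θ₁ * Amat l₂ θ₂ * Amat l₃ θ₃ * gammaMat L) =
      2 * Real.sinh (L / 2) * Real.cos θ₁ * Real.cos θ₂ * Real.cos θ₃ +
      2 * Real.sinh (L / 2 - (l₂ - l₁)) * Real.sin θ₁ * Real.sin θ₂ * Real.cos θ₃ -
      2 * Real.sinh (L / 2 - (l₃ - l₁)) * Real.sin θ₁ * Real.cos θ₂ * Real.sin θ₃ +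
      2 * Real.sinh (L / 2 - (l₃ - l₂)) * Real.cos θ₁ * Real.sin θ₂ * Real.sin θ₃ := by
  simp only [Amat, gammaMat, Matrix.trace_fin_two, Matrix.mul_apply, Fin.sum_univ_two, Matrix.of_apply,
    Matrix.cons_val', Matrix.cons_val_zero, Matrix.cons_val_one, Matrix.head_cons,
    Matrix.head_fin_const, Matrix.empty_val', Matrix.cons_val_fin_one,
    Real.sinh_eq, Real.exp_sub, Real.exp_neg]
  field_simp [Real.exp_ne_zero]
  ring_nf
end

section
/- Let n ≥ 1, let l_1,…,l_n, θ_1,…,θ_n, L be real numbers, let f_1,…,f_n be invertible 2×2 real matrices satisfying f_i⁻¹ D f_i = A(l_i, θ_i) for each i, and define T : ℝ → ℝ by T(z) = Tr( (f_1⁻¹ S(z) f_1)⋯(f_n⁻¹ S(z) f_n)·γ_L ). Then the first derivative of T at 0 equals sinh(L/2) · Σ_{i=1}^n cos θ_i. -/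
open Finset

attribute [local instance] Matrix.linftyOpNormedRing Matrix.linftyOpNormedAlgebra

private abbrev Mat2 := Matrix (Fin 2) (Fin 2) ℝ

private lemma Smat_eq (z : ℝ) :
    Smat z = Real.cosh (z/2) • (1 : Mat2) + Real.sinh (z/2) • Dmat := by
  ext i j
  fin_cases i <;> fin_cases j <;>
    simp [Smat, Dmat, Matrix.one_apply, Real.cosh_eq, Real.sinh_eq] <;> ring

private lemma listprod_hasDerivAt {α : Type*} (lst : List α) (g : α → ℝ → Mat2)
    (g' : α → Mat2)
    (hd : ∀ a ∈ lst, HasDerivAt (g a) (g' a) 0) (h1 : ∀ a ∈ lst, g a 0 = 1) :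
    HasDerivAt (fun z => (lst.map (fun a => g a z)).prod) ((lst.map g').sum) 0 := by
  induction lst with
  | nil => simpa using (show HasDerivAt (fun _ : ℝ => (1 : Mat2)) 0 0 from hasDerivAt_const (0:ℝ) (1 : Mat2))
  | cons a t ih =>
    have ht := ih (fun b hb => hd b (List.mem_cons_of_mem a hb))
      (fun b hb => h1 b (List.mem_cons_of_mem a hb))
    have ha := hd a List.mem_cons_self
    have := ha.mul ht
    have hP : (t.map (fun b => g b 0)).prod = 1 := by
      have : t.map (fun b => g b 0) = t.map (fun _ => (1:Mat2)) :=
        List.map_congr_left (fun b hb => h1 b (List.mem_cons_of_mem a hb))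
      simp [this]
    simpa [hP, h1 a List.mem_cons_self] using
      (show HasDerivAt (fun z => g a z * (t.map (fun b => g b z)).prod) _ 0 from this)

/-- first derivative of `T` at `0` equals `sinh(L/2)·Σ cos θᵢ`. -/
theorem deriv_trace_eq (n : ℕ) (hn : 1 ≤ n) (l θ : Fin n → ℝ) (L : ℝ)
    (f : Fin n → Matrix (Fin 2) (Fin 2) ℝ) (hf : ∀ i, IsUnit (f i))
    (hA : ∀ i, (f i)⁻¹ * Dmat * f i = Amat (l i) (θ i)) :
    deriv
      (fun z : ℝ =>
        Matrix.trace
          ((List.ofFn fun i : Fin n => (f i)⁻¹ * Smat z * f i).prod * gammaMat L)) 0 =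
    Real.sinh (L / 2) * ∑ i, Real.cos (θ i) := by
  set g : Fin n → ℝ → Mat2 := fun i z =>
    Real.cosh (z/2) • (1 : Mat2) + Real.sinh (z/2) • Amat (l i) (θ i) with hg
  set g' : Fin n → Mat2 := fun i => (1/2 : ℝ) • Amat (l i) (θ i) with hg'
  have key : ∀ (i : Fin n) (z : ℝ), (f i)⁻¹ * Smat z * f i = g i z := by
    intro i z
    have hdet : IsUnit (f i).det := (Matrix.isUnit_iff_isUnit_det _).mp (hf i)
    rw [Smat_eq, hg]
    simp only [Matrix.mul_add, Matrix.add_mul, Matrix.mul_smul, Matrix.smul_mul,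
      Matrix.mul_one, Matrix.nonsing_inv_mul _ hdet, ← mul_assoc, hA i]
  have hderiv : ∀ i : Fin n, HasDerivAt (g i) (g' i) 0 := by
    intro i
    have hc : HasDerivAt (fun z : ℝ => Real.cosh (z/2)) (Real.sinh (0/2) * (1/2)) 0 := by
      exact (Real.hasDerivAt_cosh (0/2)).comp 0 ((hasDerivAt_id (0:ℝ)).div_const 2)
    have hs : HasDerivAt (fun z : ℝ => Real.sinh (z/2)) (Real.cosh (0/2) * (1/2)) 0 := by
      exact (Real.hasDerivAt_sinh (0/2)).comp 0 ((hasDerivAt_id (0:ℝ)).div_const 2)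
    have := (hc.smul_const (1 : Mat2)).add (hs.smul_const (Amat (l i) (θ i)))
    simpa [hg, hg', Real.sinh_zero, Real.cosh_zero] using
      (show HasDerivAt (fun z : ℝ => Real.cosh (z/2) • (1 : Mat2) + Real.sinh (z/2) • Amat (l i) (θ i)) _ 0 from this)
  have hone : ∀ i : Fin n, g i 0 = 1 := by
    intro i; simp [hg]
  have hP := listprod_hasDerivAt (List.finRange n) g g'
    (fun a _ => hderiv a) (fun a _ => hone a)
  have hQ := hP.mul_const (gammaMat L)
  have hsum : ((List.finRange n).map g').sum = ∑ i, g' i := by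
    rw [← List.ofFn_eq_map, List.sum_ofFn]
  have e : Mat2 →L[ℝ] ℝ := LinearMap.toContinuousLinearMap (Matrix.traceLinearMap (Fin 2) ℝ ℝ)
  have hT : HasDerivAt
      (fun z : ℝ =>
        Matrix.trace
          ((List.ofFn fun i : Fin n => (f i)⁻¹ * Smat z * f i).prod * gammaMat L))
      (Matrix.trace ((∑ i, g' i) * gammaMat L)) 0 := by
    have := (LinearMap.toContinuousLinearMap
      (Matrix.traceLinearMap (Fin 2) ℝ ℝ)).hasFDerivAt.comp_hasDerivAt 0 hQ
    simp only [hsum] at this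
    have hfun : (fun z : ℝ =>
        Matrix.trace
          ((List.ofFn fun i : Fin n => (f i)⁻¹ * Smat z * f i).prod * gammaMat L)) =
        fun z : ℝ => (LinearMap.toContinuousLinearMap (Matrix.traceLinearMap (Fin 2) ℝ ℝ))
          (((List.finRange n).map (fun a => g a z)).prod * gammaMat L) := by
      funext z
      simp only [LinearMap.coe_toContinuousLinearMap', Matrix.traceLinearMap_apply]
      rw [List.ofFn_eq_map, List.map_congr_left (fun i _ => key i z)]
    rw [hfun]
    simpa using (show HasDerivAt (fun z : ℝ => (LinearMap.toContinuousLinearMap (Matrix.traceLinearMap (Fin 2) ℝ ℝ))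
      (((List.finRange n).map (fun a => g a z)).prod * gammaMat L)) (Matrix.trace ((∑ i, g' i) * gammaMat L)) 0 from this)
  rw [hT.deriv]
  rw [Finset.sum_mul, Matrix.trace_sum, Finset.mul_sum]
  refine Finset.sum_congr rfl (fun i _ => ?_)
  simp [hg', Amat, gammaMat, Matrix.trace_fin_two, Matrix.mul_apply, Fin.sum_univ_two,
    Real.sinh_eq]
  ring
end
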